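/- arXiv:1509.07941 — 4 statements merged into one kernel-verified Lean document; each statement's English description precedes it below -/
import Mathlib

section
/- Let j(n) be an integer-valued sequence with 0 < j(n) < n such that j(n) → ∞ and n − j(n) → ∞ as n → ∞. Define λ(n) = C(n, j(n))/j(n)! and d_1(n) = C(n, j(n))·( C(n, j(n)) − C(n−j(n), j(n)) )/(j(n)!)². Then d_1(n) is asymptotically equal to λ(n)²·(1 − e^{−j(n)²/n}), i.e., d_1(n) / ( λ(n)²·(1 − e^{−j(n)²/n}) ) → 1 as n → ∞. -/
open scoped Classical
open Filter

noncomputable section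

/-- `τ` occurs in `σ` at the strictly increasing positions given by `f`:
`f` is strictly increasing and `σ ∘ f` is order-isomorphic to `τ`. -/
def OccursAt {m n : ℕ} (τ : Equiv.Perm (Fin m)) (σ : Equiv.Perm (Fin n))
    (f : Fin m → Fin n) : Prop :=
  StrictMono f ∧ ∀ k l, σ (f k) < σ (f l) ↔ τ k < τ l

/-- `τ` occurs in `σ` at the set of positions `α` (listed in increasing order). -/
def OccursOn {m n : ℕ} (τ : Equiv.Perm (Fin m)) (σ : Equiv.Perm (Fin n))
    (α : Finset (Fin n)) : Prop :=
  ∃ f : Fin m → Fin n, StrictMono f ∧ Finset.univ.image f = α ∧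
    ∀ k l, σ (f k) < σ (f l) ↔ τ k < τ l

/-- `τ` occurs in `σ` at the consecutive (0-indexed) positions `i, i+1, …, i+m-1`. -/
def OccursConsec {m n : ℕ} (τ : Equiv.Perm (Fin m)) (σ : Equiv.Perm (Fin n)) (i : ℕ) : Prop :=
  ∃ h : i + m ≤ n, ∀ k l : Fin m,
    σ ⟨i + k, by have := k.isLt; omega⟩ < σ ⟨i + l, by have := l.isLt; omega⟩ ↔ τ k < τ l

/-- The overlap count `L_s(τ)`: the number of permutations of `[2m-s]` containing
two occurrences of `τ` at index sets sharing exactly `s` elements. -/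
def overlapCount {m : ℕ} (τ : Equiv.Perm (Fin m)) (s : ℕ) : ℕ :=
  Set.ncard {ρ : Equiv.Perm (Fin (2 * m - s)) |
    ∃ α β : Finset (Fin (2 * m - s)), α.card = m ∧ β.card = m ∧ (α ∩ β).card = s ∧
      OccursOn τ ρ α ∧ OccursOn τ ρ β}

/-- The sequential overlap count `L̄_s(τ)`: the number of permutations of `[2m-s]` with
occurrences of `τ` at positions `(1,…,m)` and `(m-s+1,…,2m-s)`. -/
def seqOverlapCount {m : ℕ} (τ : Equiv.Perm (Fin m)) (s : ℕ) : ℕ :=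
  Set.ncard {ρ : Equiv.Perm (Fin (2 * m - s)) |
    OccursConsec τ ρ 0 ∧ OccursConsec τ ρ (m - s)}

/-- The number of inversions of a permutation. -/
def invCount {n : ℕ} (σ : Equiv.Perm (Fin n)) : ℕ :=
  (Finset.univ.filter fun p : Fin n × Fin n => p.1 < p.2 ∧ σ p.2 < σ p.1).card

/-- The inversion polynomial `I_n(q) = ∏_{j=1}^n (1 + q + ⋯ + q^{j-1})`. -/
def invPoly (n : ℕ) (q : ℝ) : ℝ :=
  ∏ j ∈ Finset.range n, ∑ i ∈ Finset.range (j + 1), q ^ i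

/-- Probability of the event `E` under the uniform distribution on `S_n`. -/
def unifProb {n : ℕ} (E : Set (Equiv.Perm (Fin n))) : ℝ :=
  (E.ncard : ℝ) / (n.factorial : ℝ)

/-- Probability of the event `E` under the Mallows(q) distribution on `S_n`. -/
def mallowsProb {n : ℕ} (q : ℝ) (E : Set (Equiv.Perm (Fin n))) : ℝ :=
  (∑ σ ∈ Finset.univ.filter (· ∈ E), q ^ invCount σ) / invPoly n q

/-- Expectation of `X` under the uniform distribution on `S_n`. -/
def unifExp {n : ℕ} (X : Equiv.Perm (Fin n) → ℝ) : ℝ :=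
  (∑ σ : Equiv.Perm (Fin n), X σ) / (n.factorial : ℝ)

/-- Expectation of `X` under the Mallows(q) distribution on `S_n`. -/
def mallowsExp {n : ℕ} (q : ℝ) (X : Equiv.Perm (Fin n) → ℝ) : ℝ :=
  (∑ σ : Equiv.Perm (Fin n), X σ * q ^ invCount σ) / invPoly n q

/-- The Poisson(lam) probability mass function. -/
def poissonPMF (lam : ℝ) (k : ℕ) : ℝ :=
  Real.exp (-lam) * lam ^ k / (k.factorial : ℝ)

/-- Total variation distance between the law of the ℕ-valued statistic `W` of a uniformly
random permutation of `[n]` and the Poisson(lam) distribution. -/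
def dTVNatUnif {n : ℕ} (W : Equiv.Perm (Fin n) → ℕ) (lam : ℝ) : ℝ :=
  (1 / 2) * ∑' k : ℕ, |unifProb {σ | W σ = k} - poissonPMF lam k|

/-- Total variation distance between the law of the ℕ-valued statistic `W` of a Mallows(q)
random permutation of `[n]` and the Poisson(lam) distribution. -/
def dTVNatMallows {n : ℕ} (q : ℝ) (W : Equiv.Perm (Fin n) → ℕ) (lam : ℝ) : ℝ :=
  (1 / 2) * ∑' k : ℕ, |mallowsProb q {σ | W σ = k} - poissonPMF lam k|

/-- Total variation distance between the joint law of the indicator family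
`(X_α)_{α ∈ I}` of a uniformly random permutation of `[n]` and the joint law of
independent Bernoulli random variables with marginals `p`. -/
def dTVFamUnif {n : ℕ} {I : Type*} [Fintype I] [DecidableEq I]
    (X : Equiv.Perm (Fin n) → I → Prop) (p : I → ℝ) : ℝ :=
  (1 / 2) * ∑ x : I → Bool,
    |unifProb {σ | ∀ α, X σ α ↔ x α = true} - ∏ α, (if x α then p α else 1 - p α)|

/-- Total variation distance between the joint law of the indicator family
`(X_α)_{α ∈ I}` of a Mallows(q) random permutation of `[n]` and the joint law of
independent Bernoulli random variables with marginals `p`. -/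
def dTVFamMallows {n : ℕ} (q : ℝ) {I : Type*} [Fintype I] [DecidableEq I]
    (X : Equiv.Perm (Fin n) → I → Prop) (p : I → ℝ) : ℝ :=
  (1 / 2) * ∑ x : I → Bool,
    |mallowsProb q {σ | ∀ α, X σ α ↔ x α = true} - ∏ α, (if x α then p α else 1 - p α)|


private lemma descFact_cast (m k : ℕ) (h : k ≤ m) :
    ((m.descFactorial k : ℕ) : ℝ) = ∏ i ∈ Finset.range k, ((m : ℝ) - i) := by
  rw [Nat.descFactorial_eq_prod_range, Nat.cast_prod]
  refine Finset.prod_congr rfl fun i hi => ?_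
  have : i ≤ m := le_of_lt (lt_of_lt_of_le (Finset.mem_range.1 hi) h)
  push_cast [Nat.cast_sub this]
  ring

private lemma descFact_pos (m k : ℕ) (h : k ≤ m) :
    (0:ℝ) < ((m.descFactorial k : ℕ) : ℝ) := by
  have : m.descFactorial k ≠ 0 := fun hz =>
    absurd (Nat.descFactorial_eq_zero_iff_lt.1 hz) (by omega)
  exact_mod_cast Nat.pos_of_ne_zero this

private lemma choose_ratio (n j : ℕ) :
    ((n - j).choose j : ℝ) / (n.choose j : ℝ)
      = (((n - j).descFactorial j : ℕ) : ℝ) / ((n.descFactorial j : ℕ) : ℝ) := by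
  rw [Nat.descFactorial_eq_factorial_mul_choose, Nat.descFactorial_eq_factorial_mul_choose]
  push_cast
  rw [mul_div_mul_left]
  exact Nat.cast_ne_zero.2 (Nat.factorial_ne_zero j)

private lemma pow_eq_prod_const (c : ℝ) (k : ℕ) : c ^ k = ∏ _i ∈ Finset.range k, c := by
  rw [Finset.prod_const, Finset.card_range]

private lemma R_le (n j : ℕ) (hj : 0 < j) (hjn : j < n) :
    ((n - j).choose j : ℝ) / (n.choose j : ℝ) ≤ Real.exp (-(j:ℝ)^2 / n) := by
  rcases lt_or_ge n (2*j) with h2 | h2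
  · have : n - j < j := by omega
    rw [Nat.choose_eq_zero_of_lt this]
    simp only [Nat.cast_zero, zero_div]
    positivity
  · have hA := descFact_pos n j (le_of_lt hjn)
    have hn0 : (0:ℝ) < (n:ℝ) := by exact_mod_cast (by omega : 0 < n)
    have hne : (n:ℝ) ≠ 0 := hn0.ne'
    have h2' : 2*(j:ℝ) ≤ n := by exact_mod_cast h2
    have hj' : (0:ℝ) < (j:ℝ) := by exact_mod_cast hj
    have hcast : ((n - j : ℕ) : ℝ) = (n:ℝ) - j := by
      push_cast [Nat.cast_sub (by omega : j ≤ n)]; ring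
    rw [choose_ratio, div_le_iff₀ hA]
    have key : (((n - j).descFactorial j : ℕ) : ℝ)
        ≤ ((n.descFactorial j : ℕ) : ℝ) * (((n:ℝ) - j)/n)^j := by
      rw [descFact_cast (n-j) j (by omega), descFact_cast n j (by omega),
        pow_eq_prod_const, ← Finset.prod_mul_distrib]
      refine Finset.prod_le_prod (fun i hi => ?_) (fun i hi => ?_)
      · have hi' : (i:ℝ) + 1 ≤ (j:ℝ) := by exact_mod_cast Finset.mem_range.1 hi
        rw [hcast]; nlinarith
      · have hi' : (i:ℝ) + 1 ≤ (j:ℝ) := by exact_mod_cast Finset.mem_range.1 hi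
        rw [hcast, ← mul_div_assoc, le_div_iff₀ hn0]
        nlinarith
    have hstep : ((n:ℝ) - j)/n ≤ Real.exp (-((j:ℝ)/n)) := by
      have h1 := Real.add_one_le_exp (-((j:ℝ)/n))
      have h2'' : ((n:ℝ) - j)/n = -((j:ℝ)/n) + 1 := by field_simp; ring
      linarith [h2''.le, h2''.ge]
    have hstep0 : (0:ℝ) ≤ ((n:ℝ) - j)/n := by
      apply div_nonneg _ hn0.le; nlinarith
    have hpow : (((n:ℝ) - j)/n)^j ≤ Real.exp (-((j:ℝ)/n))^j :=
      pow_le_pow_left₀ hstep0 hstep j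
    have hexp : Real.exp (-((j:ℝ)/n))^j = Real.exp (-(j:ℝ)^2/n) := by
      rw [← Real.exp_nat_mul]; congr 1; ring
    calc (((n - j).descFactorial j : ℕ) : ℝ)
        ≤ ((n.descFactorial j : ℕ) : ℝ) * (((n:ℝ) - j)/n)^j := key
      _ ≤ ((n.descFactorial j : ℕ) : ℝ) * Real.exp (-(j:ℝ)^2/n) := by
          rw [← hexp]; exact mul_le_mul_of_nonneg_left hpow hA.le
      _ = Real.exp (-(j:ℝ)^2/n) * ((n.descFactorial j : ℕ) : ℝ) := mul_comm _ _

private lemma R_ge (n j : ℕ) (ε : ℝ) (hε : 0 < ε) (hj : 0 < j) (hjn : j < n)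
    (hn : (n:ℝ) ≤ (1+ε) * ((n:ℝ) - 2*j)) :
    Real.exp (-((1+ε) * ((j:ℝ)^2 / n))) ≤ ((n - j).choose j : ℝ) / (n.choose j : ℝ) := by
  have hn0 : (0:ℝ) < (n:ℝ) := by
    exact_mod_cast (by omega : 0 < n)
  have hne : (n:ℝ) ≠ 0 := hn0.ne'
  have hj' : (0:ℝ) < (j:ℝ) := by exact_mod_cast hj
  have h2j : (2:ℝ)*j < n := by nlinarith
  have h2 : 2*j < n := by exact_mod_cast h2j
  have hA := descFact_pos n j (le_of_lt hjn)
  have hcast : ((n - j : ℕ) : ℝ) = (n:ℝ) - j := by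
    push_cast [Nat.cast_sub (by omega : j ≤ n)]; ring
  rw [choose_ratio, le_div_iff₀ hA]
  have ht : (0:ℝ) ≤ (j:ℝ)/n := by positivity
  have htn : (j:ℝ)/n * n = j := div_mul_cancel₀ _ hne
  have hc : (0:ℝ) < ((n:ℝ) - 2*j)/((n:ℝ) - j) := div_pos (by nlinarith) (by nlinarith)
  have hstep : Real.exp (-((1+ε)*((j:ℝ)/n))) ≤ ((n:ℝ) - 2*j)/((n:ℝ) - j) := by
    have hexp : (1:ℝ) + (1+ε)*((j:ℝ)/n) ≤ Real.exp ((1+ε)*((j:ℝ)/n)) := by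
      linarith [Real.add_one_le_exp ((1+ε)*((j:ℝ)/n))]
    rw [Real.exp_neg, inv_le_comm₀ (Real.exp_pos _) hc, inv_div]
    refine le_trans ?_ hexp
    rw [div_le_iff₀ (by nlinarith)]
    have hmul := mul_le_mul_of_nonneg_left hn ht
    nlinarith [htn, hmul]
  have key : ((n.descFactorial j : ℕ) : ℝ) * (((n:ℝ) - 2*j)/((n:ℝ)-j))^j
      ≤ (((n - j).descFactorial j : ℕ) : ℝ) := by
    rw [descFact_cast (n-j) j (by omega), descFact_cast n j (by omega),
      pow_eq_prod_const, ← Finset.prod_mul_distrib]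
    refine Finset.prod_le_prod (fun i hi => ?_) (fun i hi => ?_)
    · have hi' : (i:ℝ) + 1 ≤ (j:ℝ) := by exact_mod_cast Finset.mem_range.1 hi
      have h1 : (0:ℝ) ≤ (n:ℝ) - i := by nlinarith
      positivity
    · have hi' : (i:ℝ) + 1 ≤ (j:ℝ) := by exact_mod_cast Finset.mem_range.1 hi
      rw [hcast, ← mul_div_assoc, div_le_iff₀ (by nlinarith : (0:ℝ) < (n:ℝ) - j)]
      nlinarith
  have hpow : Real.exp (-((1+ε)*((j:ℝ)/n)))^j ≤ (((n:ℝ) - 2*j)/((n:ℝ)-j))^j :=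
    pow_le_pow_left₀ (Real.exp_pos _).le hstep j
  have hexp2 : Real.exp (-((1+ε)*((j:ℝ)/n)))^j = Real.exp (-((1+ε) * ((j:ℝ)^2 / n))) := by
    rw [← Real.exp_nat_mul]; congr 1; ring
  calc Real.exp (-((1+ε) * ((j:ℝ)^2 / n))) * ((n.descFactorial j : ℕ) : ℝ)
      = Real.exp (-((1+ε)*((j:ℝ)/n)))^j * ((n.descFactorial j : ℕ) : ℝ) := by rw [hexp2]
    _ ≤ (((n:ℝ) - 2*j)/((n:ℝ)-j))^j * ((n.descFactorial j : ℕ) : ℝ) :=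
        mul_le_mul_of_nonneg_right hpow hA.le
    _ = ((n.descFactorial j : ℕ) : ℝ) * (((n:ℝ) - 2*j)/((n:ℝ)-j))^j := mul_comm _ _
    _ ≤ (((n - j).descFactorial j : ℕ) : ℝ) := key


private lemma one_sub_exp_le (c x : ℝ) (hc : 1 ≤ c) (hx : 0 ≤ x) :
    1 - Real.exp (-(c*x)) ≤ c * (1 - Real.exp (-x)) := by
  have hc0 : 0 < c := lt_of_lt_of_le one_pos hc
  have ha : (0:ℝ) ≤ 1 - 1/c := by
    have : 1/c ≤ 1 := by rw [div_le_one hc0]; exact hc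
    linarith
  have hb : (0:ℝ) ≤ 1/c := by positivity
  have hconv := convexOn_exp.2 (Set.mem_univ (0:ℝ)) (Set.mem_univ (-(c*x))) ha hb
    (by field_simp; ring)
  simp only [smul_eq_mul] at hconv
  have harg : (1 - 1/c) * 0 + 1/c * -(c*x) = -x := by field_simp; ring
  rw [harg, Real.exp_zero] at hconv
  have hmul := mul_le_mul_of_nonneg_left hconv hc0.le
  have hcc : c * ((1 - 1/c) * 1 + 1/c * Real.exp (-(c*x))) = c - 1 + Real.exp (-(c*x)) := by
    field_simp
  nlinarith [hmul, hcc]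


set_option maxHeartbeats 1000000 in
/-- Lemma: if `j(n) → ∞` and `n − j(n) → ∞`, then
`d₁(n) ∼ λ(n)²·(1 − e^{−j(n)²/n})`. -/
theorem stmt11 (j : ℕ → ℕ)
    (hj : ∀ᶠ n in Filter.atTop, 0 < j n ∧ j n < n)
    (hj2 : Filter.Tendsto j Filter.atTop Filter.atTop)
    (hnj : Filter.Tendsto (fun n => n - j n) Filter.atTop Filter.atTop) :
    Filter.Tendsto (fun n : ℕ =>
        ((n.choose (j n) : ℝ) * ((n.choose (j n) : ℝ) - ((n - j n).choose (j n) : ℝ))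
            / ((j n).factorial : ℝ) ^ 2)
          / (((n.choose (j n) : ℝ) / ((j n).factorial : ℝ)) ^ 2
              * (1 - Real.exp (-(j n : ℝ) ^ 2 / (n : ℝ)))))
      Filter.atTop (nhds 1) := by
  have hEq : (fun n : ℕ =>
        ((n.choose (j n) : ℝ) * ((n.choose (j n) : ℝ) - ((n - j n).choose (j n) : ℝ))
            / ((j n).factorial : ℝ) ^ 2)
          / (((n.choose (j n) : ℝ) / ((j n).factorial : ℝ)) ^ 2
              * (1 - Real.exp (-(j n : ℝ) ^ 2 / (n : ℝ)))))
      =ᶠ[atTop] (fun n : ℕ =>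
        (1 - ((n - j n).choose (j n) : ℝ) / (n.choose (j n) : ℝ))
          / (1 - Real.exp (-(j n : ℝ) ^ 2 / (n : ℝ)))) := by
    filter_upwards [hj] with n hn
    obtain ⟨hj0, hjn⟩ := hn
    have hn0 : (0:ℝ) < (n:ℝ) := by exact_mod_cast (by omega : 0 < n)
    have hx : (0:ℝ) < (j n : ℝ)^2 / n := by
      have : (0:ℝ) < (j n : ℝ) := by exact_mod_cast hj0
      positivity
    have hE : Real.exp (-(j n : ℝ)^2 / (n:ℝ)) < 1 := by
      rw [Real.exp_lt_one_iff]
      rw [neg_div]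
      linarith
    have h1E : (1:ℝ) - Real.exp (-(j n : ℝ)^2 / (n:ℝ)) ≠ 0 := by linarith
    have hA : ((n.choose (j n) : ℕ) : ℝ) ≠ 0 := by
      exact_mod_cast (Nat.choose_pos (le_of_lt hjn)).ne'
    have hF : (((j n).factorial : ℕ) : ℝ) ≠ 0 :=
      Nat.cast_ne_zero.2 (Nat.factorial_ne_zero _)
    field_simp
  rw [tendsto_congr' hEq, Metric.tendsto_nhds]
  intro ε hε
  set ε' : ℝ := ε/2 with hε'def
  have hε' : 0 < ε' := by positivity
  set M : ℝ := Real.log ((1+ε')/ε') with hMdef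
  have hM : 0 < M := Real.log_pos (by rw [lt_div_iff₀ hε']; linarith)
  have hexpM : Real.exp (-M) = ε'/(1+ε') := by
    rw [Real.exp_neg, hMdef, Real.exp_log (by positivity), inv_div]
  have hKev : ∀ᶠ n in atTop, (2*M*(1+ε')/ε' : ℝ) ≤ (j n : ℝ) := by
    filter_upwards [hj2.eventually_ge_atTop (⌈(2*M*(1+ε')/ε' : ℝ)⌉₊)] with n hn
    calc (2*M*(1+ε')/ε' : ℝ) ≤ (⌈(2*M*(1+ε')/ε' : ℝ)⌉₊ : ℝ) := Nat.le_ceil _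
      _ ≤ (j n : ℝ) := by exact_mod_cast hn
  filter_upwards [hj, hKev] with n hn hK
  obtain ⟨hj0, hjn⟩ := hn
  have hn0 : (0:ℝ) < (n:ℝ) := by exact_mod_cast (by omega : 0 < n)
  have hjr : (0:ℝ) < (j n : ℝ) := by exact_mod_cast hj0
  have hjnr : (j n : ℝ) < (n:ℝ) := by exact_mod_cast hjn
  set x : ℝ := (j n : ℝ)^2 / n with hxdef
  have hx : 0 < x := by positivity
  have hxeq : -(j n : ℝ)^2 / (n:ℝ) = -x := by rw [hxdef, neg_div]
  have hE : Real.exp (-(j n : ℝ)^2 / (n:ℝ)) < 1 := by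
    rw [hxeq, Real.exp_lt_one_iff]; linarith
  have h1E : (0:ℝ) < 1 - Real.exp (-(j n : ℝ)^2 / (n:ℝ)) := by linarith
  set R : ℝ := ((n - j n).choose (j n) : ℝ) / (n.choose (j n) : ℝ) with hRdef
  have hR0 : 0 ≤ R := by positivity
  have hRle : R ≤ Real.exp (-(j n : ℝ)^2 / (n:ℝ)) := R_le n (j n) hj0 hjn
  -- lower bound : 1 ≤ g
  have hglow : 1 ≤ (1 - R) / (1 - Real.exp (-(j n : ℝ)^2 / (n:ℝ))) := by
    rw [le_div_iff₀ h1E, one_mul]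
    linarith
  -- upper bound : g ≤ 1 + ε'
  have hghigh : (1 - R) / (1 - Real.exp (-(j n : ℝ)^2 / (n:ℝ))) ≤ 1 + ε' := by
    rw [div_le_iff₀ h1E]
    rcases le_or_gt M x with hMx | hMx
    · -- large x : exp ≤ ε'/(1+ε')
      have hEe : Real.exp (-(j n : ℝ)^2 / (n:ℝ)) ≤ ε'/(1+ε') := by
        rw [hxeq, ← hexpM]
        exact Real.exp_le_exp.2 (by linarith)
      have hcancel : ε'/(1+ε') * (1+ε') = ε' := div_mul_cancel₀ _ (by linarith)
      nlinarith [hEe, hcancel, hR0]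
    · -- small x : use R_ge
      have hjn2 : (j n : ℝ) * (j n : ℝ) < M * n := by
        have := (div_lt_iff₀ hn0).1 hMx
        nlinarith
      have hjK : 2*M*(1+ε') ≤ (j n : ℝ) * ε' := by
        have := mul_le_mul_of_nonneg_right hK hε'.le
        calc 2*M*(1+ε') = 2*M*(1+ε')/ε' * ε' := by field_simp
          _ ≤ (j n : ℝ) * ε' := this
      have hjn3 : (j n : ℝ) / n ≤ ε' / (2*(1+ε')) := by
        rw [div_le_div_iff₀ hn0 (by linarith)]
        -- j * (2*(1+ε')) ≤ ε' * n
        -- from j*j < M*n and 2M(1+ε') ≤ j ε' : j*j*ε' * 2(1+ε') ≤ ... 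
        nlinarith [hjn2, hjK, hjr, hn0, hε', hM]
      have hncond : (n:ℝ) ≤ (1+ε') * ((n:ℝ) - 2*(j n)) := by
        have h := (div_le_div_iff₀ hn0 (by linarith : (0:ℝ) < 2*(1+ε'))).1 hjn3
        ring_nf at h ⊢
        linarith [h]
      have hRge := R_ge n (j n) ε' hε' hj0 hjn hncond
      have hone := one_sub_exp_le (1+ε') x (by linarith) hx.le
      have hRge' : Real.exp (-((1+ε') * x)) ≤ R := by
        rw [hRdef]; rw [hxdef]; exact hRge
      rw [hxeq]
      nlinarith [hRge', hone]
  have habs : dist ((1 - R) / (1 - Real.exp (-(j n : ℝ)^2 / (n:ℝ)))) 1 ≤ ε' := by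
    rw [Real.dist_eq, abs_le]
    constructor <;> [linarith; linarith]
  calc dist ((1 - R) / (1 - Real.exp (-(j n : ℝ)^2 / (n:ℝ)))) 1 ≤ ε' := habs
    _ < ε := by rw [hε'def]; linarith

end
end

section
/- Let Σ_n be a uniformly random permutation of [n], let W be the number of fixed points of Σ_n, and let Y be a Poisson random variable with mean 1. Then for all n ≥ 1, d_TV( L(W), L(Y) ) ≤ 3·(1 − e^{−1})/n. Consequently, the number e(n) of derangements of [n] (permutations without fixed points) satisfies n!·e^{−1} − 3·(n−1)!·(1 − e^{−1}) ≤ e(n) ≤ n!·e^{−1} + 3·(n−1)!·(1 − e^{−1}). -/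
open scoped Classical
open Filter

noncomputable section

section AuxStmt12

lemma expNegPartial (N : ℕ) :
    Filter.Tendsto (fun n => ∑ i ∈ Finset.range n, (-1:ℝ) ^ i * (i.factorial : ℝ)⁻¹)
      atTop (nhds (Real.exp (-1))) := by
  have h := NormedSpace.expSeries_div_hasSum_exp (-1 : ℝ)
  rw [← Real.exp_eq_exp_ℝ] at h
  have := h.tendsto_sum_nat
  simpa [div_eq_mul_inv] using this

lemma altTail (N : ℕ) :
    |∑ i ∈ Finset.range N, (-1:ℝ) ^ i / (i.factorial : ℝ) - Real.exp (-1)| ≤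
      (N.factorial : ℝ)⁻¹ := by
  have hf : Antitone (fun i : ℕ => ((i.factorial : ℝ))⁻¹) := by
    intro a b hab
    have h1 : (a.factorial:ℝ) ≤ b.factorial := by exact_mod_cast Nat.factorial_le hab
    exact inv_anti₀ (by positivity) h1
  have hl := expNegPartial 0
  have key : ∀ M : ℕ, |∑ i ∈ Finset.range M, (-1:ℝ) ^ i * (i.factorial : ℝ)⁻¹ - Real.exp (-1)|
      ≤ (M.factorial : ℝ)⁻¹ := by
    intro M
    set g : ℕ → ℝ := fun i => (-1:ℝ) ^ i * (i.factorial : ℝ)⁻¹ with hg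
    rcases Nat.even_or_odd M with ⟨k, hk⟩ | ⟨k, hk⟩
    · have hM : M = 2 * k := by omega
      subst hM
      have h1 := hf.alternating_series_le_tendsto (expNegPartial 0) k
      have h2 := hf.tendsto_le_alternating_series (expNegPartial 0) k
      have h3 : ∑ i ∈ Finset.range (2*k+1), g i
          = (∑ i ∈ Finset.range (2*k), g i) + ((2*k).factorial : ℝ)⁻¹ := by
        rw [Finset.sum_range_succ, hg]
        simp [pow_mul]
      rw [h3] at h2
      rw [abs_le]; constructor <;> simp only [hg] at * <;> linarith
    · have hM : M = 2 * k + 1 := by omega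
      subst hM
      have h1 := hf.alternating_series_le_tendsto (expNegPartial 0) (k+1)
      have h2 := hf.tendsto_le_alternating_series (expNegPartial 0) k
      have h3 : ∑ i ∈ Finset.range (2*(k+1)), g i
          = (∑ i ∈ Finset.range (2*k+1), g i) - (((2*k+1)).factorial : ℝ)⁻¹ := by
        have : 2*(k+1) = (2*k+1)+1 := by ring
        rw [this, Finset.sum_range_succ, hg]
        have : (-1:ℝ) ^ (2*k+1) = -1 := by
          rw [pow_succ, pow_mul]; simp
        simp [this]; ring
      rw [h3] at h1
      rw [abs_le]; constructor <;> simp only [hg] at * <;> linarith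
  have := key N
  simpa [div_eq_mul_inv] using this

lemma numDerangements_div (m : ℕ) :
    (numDerangements m : ℝ) / (m.factorial : ℝ)
      = ∑ j ∈ Finset.range (m + 1), (-1 : ℝ) ^ j / (j.factorial : ℝ) := by
  rw [← Int.cast_natCast, numDerangements_sum]
  push_cast
  rw [Finset.sum_div]
  refine Finset.sum_congr rfl ?_
  intro k hk
  have h_le : k ≤ m := Finset.mem_range_succ_iff.mp hk
  rw [Nat.ascFactorial_eq_div, add_tsub_cancel_of_le h_le]
  push_cast [Nat.factorial_dvd_factorial h_le]
  field_simp [Nat.factorial_ne_zero]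

lemma card_fixed_eq_set (n : ℕ) (T : Finset (Fin n)) :
    (Finset.univ.filter fun σ : Equiv.Perm (Fin n) =>
      (Finset.univ.filter fun i => σ i = i) = T).card = numDerangements (n - T.card) := by
  rw [← Fintype.card_subtype]
  have e1 : {σ : Equiv.Perm (Fin n) // (Finset.univ.filter fun i => σ i = i) = T}
      ≃ {f : Equiv.Perm (Fin n) // ∀ a, ¬(a ∉ T) ↔ a ∈ Function.fixedPoints f} := by
    refine Equiv.subtypeEquivRight fun f => ?_
    rw [Finset.ext_iff]
    constructor
    · intro h a
      have := h a
      simp only [Finset.mem_filter, Finset.mem_univ, true_and] at this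
      simp [Function.mem_fixedPoints, Function.IsFixedPt, not_not, ← this]
    · intro h a
      have := h a
      simp only [Function.mem_fixedPoints, Function.IsFixedPt, not_not] at this
      simp [this]
  have e2 := (derangements.subtypeEquiv (fun a : Fin n => a ∉ T)).symm
  rw [Fintype.card_congr (e1.trans e2)]
  rw [card_derangements_eq_numDerangements]
  congr 1
  rw [Fintype.card_subtype_compl, Fintype.card_fin, Fintype.card_coe]

lemma card_exact_fixed (n k : ℕ) :
    (Finset.univ.filter fun σ : Equiv.Perm (Fin n) =>
      (Finset.univ.filter fun i => σ i = i).card = k).card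
      = n.choose k * numDerangements (n - k) := by
  have hdec : (Finset.univ.filter fun σ : Equiv.Perm (Fin n) =>
      (Finset.univ.filter fun i => σ i = i).card = k)
      = (Finset.powersetCard k Finset.univ).biUnion
          (fun T => Finset.univ.filter fun σ => (Finset.univ.filter fun i => σ i = i) = T) := by
    ext σ
    simp only [Finset.mem_filter, Finset.mem_univ, true_and, Finset.mem_biUnion,
      Finset.mem_powersetCard]
    constructor
    · intro h
      exact ⟨_, ⟨Finset.subset_univ _, h⟩, rfl⟩
    · rintro ⟨T, ⟨-, hT⟩, rfl⟩
      exact hT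
  rw [hdec, Finset.card_biUnion]
  · rw [Finset.sum_congr rfl (fun T hT => ?_)]
    · rw [Finset.sum_const, Finset.card_powersetCard, Finset.card_univ, Fintype.card_fin,
        smul_eq_mul]
    · rw [card_fixed_eq_set]
      congr 2
      exact (Finset.mem_powersetCard.mp hT).2
  · intro a _ b _ hab
    simp only [Finset.disjoint_left, Finset.mem_filter]
    rintro σ ⟨-, rfl⟩ ⟨-, h2⟩
    exact hab h2

end AuxStmt12

/-- The number of fixed points of a uniformly random permutation of `[n]` is within total
variation `3(1−e⁻¹)/n` of Poisson(1), and consequently the number of derangements `e(n)`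
satisfies `n!·e⁻¹ − 3·(n−1)!·(1−e⁻¹) ≤ e(n) ≤ n!·e⁻¹ + 3·(n−1)!·(1−e⁻¹)`. -/
theorem stmt12 (n : ℕ) (hn : 1 ≤ n)
    (W : Equiv.Perm (Fin n) → ℕ)
    (hW : ∀ σ, W σ = (Finset.univ.filter fun i : Fin n => σ i = i).card)
    (e : ℕ)
    (he : e = Set.ncard {σ : Equiv.Perm (Fin n) | ∀ i, σ i ≠ i}) :
    dTVNatUnif W 1 ≤ 3 * (1 - Real.exp (-1)) / (n : ℝ)
    ∧ (n.factorial : ℝ) * Real.exp (-1)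
        - 3 * ((n - 1).factorial : ℝ) * (1 - Real.exp (-1)) ≤ (e : ℝ)
    ∧ (e : ℝ) ≤ (n.factorial : ℝ) * Real.exp (-1)
        + 3 * ((n - 1).factorial : ℝ) * (1 - Real.exp (-1)) := by
  classical
  set p : ℕ → ℝ := fun k => unifProb {σ : Equiv.Perm (Fin n) | W σ = k} with hp
  set q : ℕ → ℝ := fun k => poissonPMF 1 k with hq
  have hqk : ∀ k, q k = Real.exp (-1) * ((k.factorial : ℝ))⁻¹ := by
    intro k; simp [hq, poissonPMF, div_eq_mul_inv]
  have hqnn : ∀ k, 0 ≤ q k := by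
    intro k; rw [hqk]; positivity
  have hcard : ∀ k, Set.ncard {σ : Equiv.Perm (Fin n) | W σ = k}
      = n.choose k * numDerangements (n - k) := by
    intro k
    have hset : {σ : Equiv.Perm (Fin n) | W σ = k}
        = {σ : Equiv.Perm (Fin n) | (Finset.univ.filter fun i => σ i = i).card = k} := by
      ext σ; simp [hW]
    rw [hset, ← card_exact_fixed, Set.ncard_eq_toFinset_card']
    congr 1
    ext σ
    simp
  have hpk : ∀ k, p k = (n.choose k : ℝ) * (numDerangements (n - k) : ℝ) / (n.factorial : ℝ) := by
    intro k
    rw [hp]; simp only [unifProb, hcard k]; push_cast; ring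
  have hplem : ∀ k, k ≤ n → p k = ((k.factorial : ℝ))⁻¹ *
      (∑ j ∈ Finset.range (n - k + 1), (-1 : ℝ) ^ j / (j.factorial : ℝ)) := by
    intro k hk
    rw [hpk k, ← numDerangements_div (n - k), Nat.cast_choose (K := ℝ) hk]
    have h1 : (n.factorial : ℝ) ≠ 0 := Nat.cast_ne_zero.mpr (Nat.factorial_ne_zero n)
    have h2 : (k.factorial : ℝ) ≠ 0 := Nat.cast_ne_zero.mpr (Nat.factorial_ne_zero k)
    have h3 : ((n - k).factorial : ℝ) ≠ 0 := Nat.cast_ne_zero.mpr (Nat.factorial_ne_zero (n - k))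
    field_simp
  have hdiff : ∀ k, k ≤ n → |p k - q k| ≤
      ((k.factorial : ℝ))⁻¹ * (((n - k + 1).factorial : ℝ))⁻¹ := by
    intro k hk
    have hrw : p k - q k = ((k.factorial : ℝ))⁻¹ *
        ((∑ j ∈ Finset.range (n - k + 1), (-1 : ℝ) ^ j / (j.factorial : ℝ)) - Real.exp (-1)) := by
      rw [hplem k hk, hqk]; ring
    rw [hrw, abs_mul, abs_of_nonneg (by positivity : (0:ℝ) ≤ ((k.factorial : ℝ))⁻¹)]
    exact mul_le_mul_of_nonneg_left (altTail (n - k + 1)) (by positivity)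
  have hsumfact : Summable (fun k : ℕ => ((k.factorial : ℝ))⁻¹) := by
    have h := (NormedSpace.expSeries_div_hasSum_exp (1 : ℝ)).summable
    simpa [div_eq_mul_inv] using h
  have hexp1tsum : ∑' k : ℕ, ((k.factorial : ℝ))⁻¹ = Real.exp 1 := by
    have h := NormedSpace.expSeries_div_hasSum_exp (1 : ℝ)
    rw [← Real.exp_eq_exp_ℝ] at h
    rw [← h.tsum_eq]
    refine tsum_congr fun k => ?_
    simp [div_eq_mul_inv]
  have hsq : Summable q := by
    refine (hsumfact.mul_left (Real.exp (-1))).congr fun k => ?_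
    rw [hqk]
  have hpzero : ∀ k, n < k → p k = 0 := by
    intro k hk
    rw [hpk, Nat.choose_eq_zero_of_lt hk]
    simp
  have hsp : Summable p := by
    refine summable_of_ne_finset_zero (s := Finset.range (n + 1)) fun k hk => ?_
    exact hpzero k (by simpa using hk)
  have hsf : Summable (fun k => |p k - q k|) := (hsp.sub hsq).abs
  have htsum : ∑' k, |p k - q k|
      = (∑ k ∈ Finset.range (n + 1), |p k - q k|) + ∑' k, q (k + (n + 1)) := by
    rw [← Summable.sum_add_tsum_nat_add (n + 1) hsf]
    congr 1
    refine tsum_congr fun k => ?_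
    rw [hpzero (k + (n + 1)) (by omega), zero_sub, abs_neg, abs_of_nonneg (hqnn _)]
  have hfin : (∑ k ∈ Finset.range (n + 1), |p k - q k|)
      ≤ (2 ^ (n + 1) : ℝ) / ((n + 1).factorial : ℝ) := by
    have step1 : (∑ k ∈ Finset.range (n + 1), |p k - q k|)
        ≤ ∑ k ∈ Finset.range (n + 1), ((k.factorial : ℝ))⁻¹ * (((n - k + 1).factorial : ℝ))⁻¹ :=
      Finset.sum_le_sum fun k hk => hdiff k (Finset.mem_range_succ_iff.mp hk)
    have step2 : ∑ k ∈ Finset.range (n + 1),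
          ((k.factorial : ℝ))⁻¹ * (((n - k + 1).factorial : ℝ))⁻¹
        = (∑ k ∈ Finset.range (n + 1), ((n + 1).choose k : ℝ)) / ((n + 1).factorial : ℝ) := by
      rw [Finset.sum_div]
      refine Finset.sum_congr rfl fun k hk => ?_
      have hk' : k ≤ n := Finset.mem_range_succ_iff.mp hk
      have hnk : n - k + 1 = n + 1 - k := by omega
      rw [hnk, Nat.cast_choose (K := ℝ) (by omega : k ≤ n + 1)]
      have h2 : (k.factorial : ℝ) ≠ 0 := Nat.cast_ne_zero.mpr (Nat.factorial_ne_zero k)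
      have h3 : ((n + 1 - k).factorial : ℝ) ≠ 0 := Nat.cast_ne_zero.mpr (Nat.factorial_ne_zero _)
      have h4 : ((n + 1).factorial : ℝ) ≠ 0 := Nat.cast_ne_zero.mpr (Nat.factorial_ne_zero _)
      field_simp
    have step3 : (∑ k ∈ Finset.range (n + 1), ((n + 1).choose k : ℝ)) ≤ (2 ^ (n + 1) : ℝ) := by
      have hnat : (∑ k ∈ Finset.range (n + 1), (n + 1).choose k) ≤ 2 ^ (n + 1) := by
        calc (∑ k ∈ Finset.range (n + 1), (n + 1).choose k)
            ≤ ∑ k ∈ Finset.range (n + 2), (n + 1).choose k :=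
              Finset.sum_le_sum_of_subset (Finset.range_subset_range.mpr (by omega))
          _ = 2 ^ (n + 1) := Nat.sum_range_choose (n + 1)
      exact_mod_cast hnat
    calc (∑ k ∈ Finset.range (n + 1), |p k - q k|)
        ≤ (∑ k ∈ Finset.range (n + 1), ((n + 1).choose k : ℝ)) / ((n + 1).factorial : ℝ) := by
          rw [← step2]; exact step1
      _ ≤ (2 ^ (n + 1) : ℝ) / ((n + 1).factorial : ℝ) := by
          gcongr
  have hee : Real.exp (-1) * Real.exp 1 = 1 := by
    rw [← Real.exp_add]; norm_num
  have htail : (∑' k, q (k + (n + 1))) ≤ (((n + 1).factorial : ℝ))⁻¹ := by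
    have hb : ∀ k : ℕ, q (k + (n + 1)) ≤
        (Real.exp (-1) * (((n + 1).factorial : ℝ))⁻¹) * ((k.factorial : ℝ))⁻¹ := by
      intro k
      rw [hqk]
      have hd : k.factorial * (n + 1).factorial ≤ (k + (n + 1)).factorial :=
        Nat.le_of_dvd (Nat.factorial_pos _)
          (Nat.factorial_mul_factorial_dvd_factorial_add k (n + 1))
      have hd' : (((k + (n + 1)).factorial : ℝ))⁻¹
          ≤ ((k.factorial : ℝ) * ((n + 1).factorial : ℝ))⁻¹ := by
        apply inv_anti₀
        · positivity
        · exact_mod_cast hd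
      calc Real.exp (-1) * (((k + (n + 1)).factorial : ℝ))⁻¹
          ≤ Real.exp (-1) * ((k.factorial : ℝ) * ((n + 1).factorial : ℝ))⁻¹ :=
            mul_le_mul_of_nonneg_left hd' (Real.exp_pos _).le
        _ = (Real.exp (-1) * (((n + 1).factorial : ℝ))⁻¹) * ((k.factorial : ℝ))⁻¹ := by
            rw [mul_inv]; ring
    have hs1 : Summable (fun k => q (k + (n + 1))) := (summable_nat_add_iff (n + 1)).mpr hsq
    have hs2 : Summable (fun k : ℕ =>
        (Real.exp (-1) * (((n + 1).factorial : ℝ))⁻¹) * ((k.factorial : ℝ))⁻¹) :=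
      hsumfact.mul_left _
    calc (∑' k, q (k + (n + 1)))
        ≤ ∑' k : ℕ, (Real.exp (-1) * (((n + 1).factorial : ℝ))⁻¹) * ((k.factorial : ℝ))⁻¹ :=
          Summable.tsum_le_tsum hb hs1 hs2
      _ = (Real.exp (-1) * (((n + 1).factorial : ℝ))⁻¹) * Real.exp 1 := by
          rw [tsum_mul_left, hexp1tsum]
      _ = (((n + 1).factorial : ℝ))⁻¹ := by
          linear_combination (((n + 1).factorial : ℝ))⁻¹ * hee
  have hexp2 : Real.exp (-1) ≤ 2 / 5 := by
    have h25 : (5 : ℝ) / 2 ≤ Real.exp 1 := by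
      have := Real.exp_one_gt_d9
      linarith
    rw [Real.exp_neg]
    calc (Real.exp 1)⁻¹ ≤ ((5 : ℝ) / 2)⁻¹ := by
          apply inv_anti₀ (by norm_num) h25
      _ = 2 / 5 := by norm_num
  have h35 : (3 : ℝ) / 5 ≤ 1 - Real.exp (-1) := by linarith
  have hdTV : dTVNatUnif W 1 ≤ ((2 : ℝ) ^ (n + 1) + 1) / (2 * ((n + 1).factorial : ℝ)) := by
    have hsum_le : ∑' k, |p k - q k|
        ≤ (2 ^ (n + 1) : ℝ) / ((n + 1).factorial : ℝ) + (((n + 1).factorial : ℝ))⁻¹ := by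
      rw [htsum]; exact add_le_add hfin htail
    have hfact_pos : (0 : ℝ) < ((n + 1).factorial : ℝ) := by
      exact_mod_cast (n + 1).factorial_pos
    have heq : (2 ^ (n + 1) : ℝ) / ((n + 1).factorial : ℝ) + (((n + 1).factorial : ℝ))⁻¹
        = ((2 : ℝ) ^ (n + 1) + 1) / ((n + 1).factorial : ℝ) := by
      field_simp
    rw [heq] at hsum_le
    have hthis : dTVNatUnif W 1 = (1 / 2) * ∑' k, |p k - q k| := rfl
    rw [hthis]
    calc (1 / 2) * ∑' k, |p k - q k|
        ≤ (1 / 2) * (((2 : ℝ) ^ (n + 1) + 1) / ((n + 1).factorial : ℝ)) := by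
          apply mul_le_mul_of_nonneg_left hsum_le (by norm_num)
      _ = ((2 : ℝ) ^ (n + 1) + 1) / (2 * ((n + 1).factorial : ℝ)) := by
          field_simp
  -- numeric bound
  have hnatkey : ∀ m : ℕ, 2 ≤ m → 5 * m * (2 ^ (m + 1) + 1) ≤ 18 * (m + 1).factorial := by
    intro m hm
    induction m, hm using Nat.le_induction with
    | base => norm_num [Nat.factorial]
    | succ m hm ih =>
      have h2 : 2 * (m + 1) ≤ 3 * m := by omega
      have hstep : 5 * (m + 1) * (2 ^ (m + 1 + 1) + 1) ≤ 3 * (5 * m * (2 ^ (m + 1) + 1)) := by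
        have : 2 ^ (m + 1 + 1) + 1 ≤ 2 * (2 ^ (m + 1) + 1) := by
          rw [pow_succ]; omega
        calc 5 * (m + 1) * (2 ^ (m + 1 + 1) + 1)
            ≤ 5 * (m + 1) * (2 * (2 ^ (m + 1) + 1)) := by
              exact Nat.mul_le_mul_left _ this
          _ = 5 * (2 * (m + 1)) * (2 ^ (m + 1) + 1) := by ring
          _ ≤ 5 * (3 * m) * (2 ^ (m + 1) + 1) := by
              exact Nat.mul_le_mul_right _ (Nat.mul_le_mul_left _ h2)
          _ = 3 * (5 * m * (2 ^ (m + 1) + 1)) := by ring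
      calc 5 * (m + 1) * (2 ^ (m + 1 + 1) + 1) ≤ 3 * (5 * m * (2 ^ (m + 1) + 1)) := hstep
        _ ≤ 3 * (18 * (m + 1).factorial) := Nat.mul_le_mul_left _ ih
        _ ≤ 18 * (m + 2).factorial := by
            rw [Nat.factorial_succ (m + 1)]
            have : 3 ≤ m + 2 := by omega
            calc 3 * (18 * (m + 1).factorial) = 18 * (3 * (m + 1).factorial) := by ring
              _ ≤ 18 * ((m + 2) * (m + 1).factorial) :=
                  Nat.mul_le_mul_left _ (Nat.mul_le_mul_right _ this)
  have hnatkey' : 5 * n * (2 ^ (n + 1) + 1) ≤ 18 * (n + 1).factorial := by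
    rcases Nat.lt_or_ge n 2 with h | h
    · have h1 : n = 1 := by omega
      rw [h1]; norm_num [Nat.factorial]
    · exact hnatkey n h
  have hmain1 : ((2 : ℝ) ^ (n + 1) + 1) / (2 * ((n + 1).factorial : ℝ))
      ≤ 3 * (1 - Real.exp (-1)) / (n : ℝ) := by
    have hfact_pos : (0 : ℝ) < ((n + 1).factorial : ℝ) := by
      exact_mod_cast (n + 1).factorial_pos
    have hnpos : (0 : ℝ) < (n : ℝ) := by exact_mod_cast hn
    rw [div_le_div_iff₀ (by positivity) hnpos]
    have hcast : (5 : ℝ) * (n : ℝ) * ((2 : ℝ) ^ (n + 1) + 1)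
        ≤ 18 * ((n + 1).factorial : ℝ) := by exact_mod_cast hnatkey'
    nlinarith [hcast, hfact_pos, hnpos, h35]
  have hder : (n.factorial : ℝ) * Real.exp (-1)
        - 3 * ((n - 1).factorial : ℝ) * (1 - Real.exp (-1)) ≤ (e : ℝ)
      ∧ (e : ℝ) ≤ (n.factorial : ℝ) * Real.exp (-1)
        + 3 * ((n - 1).factorial : ℝ) * (1 - Real.exp (-1)) := by
    have hen : (e : ℝ) = (numDerangements n : ℝ) := by
      rw [he]
      congr 1
      have hsetd : {σ : Equiv.Perm (Fin n) | ∀ i, σ i ≠ i} = derangements (Fin n) := rfl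
      rw [hsetd, ← Nat.card_coe_set_eq, Nat.card_eq_fintype_card,
        card_derangements_eq_numDerangements, Fintype.card_fin]
    have heS : (e : ℝ) = (n.factorial : ℝ) *
        ∑ j ∈ Finset.range (n + 1), (-1 : ℝ) ^ j / (j.factorial : ℝ) := by
      rw [hen, ← numDerangements_div n]
      field_simp
    have hclose : |(e : ℝ) - (n.factorial : ℝ) * Real.exp (-1)| ≤ 1 := by
      rw [heS, ← mul_sub, abs_mul, abs_of_nonneg (by positivity : (0:ℝ) ≤ (n.factorial : ℝ))]
      have h := altTail (n + 1)
      have hle : (n.factorial : ℝ) * |∑ i ∈ Finset.range (n + 1),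
          (-1 : ℝ) ^ i / (i.factorial : ℝ) - Real.exp (-1)|
          ≤ (n.factorial : ℝ) * (((n + 1).factorial : ℝ))⁻¹ := by
        apply mul_le_mul_of_nonneg_left h (by positivity)
      refine hle.trans ?_
      rw [Nat.factorial_succ]
      have hfp : (0 : ℝ) < (n.factorial : ℝ) := by exact_mod_cast n.factorial_pos
      push_cast
      rw [mul_inv]
      have hn1 : (1 : ℝ) ≤ ((n : ℝ) + 1) := by
        have h0 : (0:ℝ) ≤ (n:ℝ) := by positivity
        linarith
      have heq : (n.factorial : ℝ) * (((n : ℝ) + 1)⁻¹ * ((n.factorial : ℝ))⁻¹)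
          = ((n : ℝ) + 1)⁻¹ := by
        field_simp
        try ring
      rw [heq]
      exact inv_le_one_of_one_le₀ hn1
    have hfacge : (1 : ℝ) ≤ ((n - 1).factorial : ℝ) := by
      have := (n - 1).factorial_pos
      exact_mod_cast this
    have hbig : (1 : ℝ) ≤ 3 * ((n - 1).factorial : ℝ) * (1 - Real.exp (-1)) := by
      nlinarith [hfacge, h35]
    have habs := abs_le.mp hclose
    constructor <;> nlinarith [habs.1, habs.2, hbig]
  exact ⟨hdTV.trans hmain1, hder.1, hder.2⟩


end
end

section
/- Fix q > 0 and let Σ_n be a random permutation of [n] from the Mallows(q) distribution. Then the Mallows(q) family is consecutively homogeneous: for all 1 ≤ m ≤ n, all 1 ≤ i ≤ n−m+1, and every σ ∈ S_m, P( red( Σ_n(i) Σ_n(i+1) ⋯ Σ_n(i+m−1) ) = σ ) = q^{inv(σ)}/I_m(q); that is, the reduction of any window of m consecutive positions of Σ_n is itself Mallows(q)-distributed on S_m. Moreover, if q = 1, homogeneity holds for arbitrary (not necessarily consecutive) subsequences 1 ≤ i_1 < ⋯ < i_m ≤ n: P( red( Σ_n(i_1) ⋯ Σ_n(i_m) ) =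 σ ) = 1/m!. -/
open scoped Classical
open Filter

noncomputable section

namespace Aux

variable {m n : ℕ}

/-- Two permutations with the same comparison pattern are equal. -/
lemma perm_eq_of_lt_iff (a b : Equiv.Perm (Fin m))
    (h : ∀ k l, a k < a l ↔ b k < b l) : a = b := by
  have hg : StrictMono (fun x => b (a.symm x)) := by
    intro x y hxy
    have := (h (a.symm x) (a.symm y)).mp (by simpa using hxy)
    simpa using this
  have hid : StrictMono (fun x : Fin m => x) := strictMono_id
  have hrange : Set.range (fun x => b (a.symm x)) = Set.range (fun x : Fin m => x) := by
    have h1 : Set.range (fun x => b (a.symm x)) = Set.univ :=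
      Set.range_eq_univ.mpr fun y => ⟨a (b.symm y), by simp⟩
    have h2 : Set.range (fun x : Fin m => x) = Set.univ := Set.range_eq_univ.mpr fun y => ⟨y, rfl⟩
    rw [h1, h2]
  have heq := (hg.range_inj hid).1 hrange
  ext k
  have := congrFun heq (a k)
  simp only [Equiv.symm_apply_apply] at this
  exact congrArg Fin.val this.symm

def windowSet (f : Fin m → Fin n) (π : Equiv.Perm (Fin n)) : Finset (Fin n) :=
  Finset.univ.image (fun k => π (f k))

lemma mem_windowSet {f : Fin m → Fin n} {π : Equiv.Perm (Fin n)} (k : Fin m) :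
    π (f k) ∈ windowSet f π :=
  Finset.mem_image.2 ⟨k, Finset.mem_univ _, rfl⟩

lemma windowSet_card {f : Fin m → Fin n} (hf : Function.Injective f)
    (π : Equiv.Perm (Fin n)) : (windowSet f π).card = m := by
  rw [windowSet]
  rw [Finset.card_image_of_injective _ (show Function.Injective (fun k => π (f k)) from
    fun a b hab => hf (π.injective hab)), Finset.card_univ, Fintype.card_fin]

/-- coercion compatibility of `orderIsoOfFin` under equality of finsets -/
lemma oif_coe {α : Type*} [LinearOrder α] {s s' : Finset α} (h : s' = s)
    {k : ℕ} (hc : s.card = k) (hc' : s'.card = k) (j : Fin k) :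
    ((s'.orderIsoOfFin hc') j : α) = ((s.orderIsoOfFin hc) j : α) := by
  subst h; rfl

def patFun (f : Fin m → Fin n) (hf : Function.Injective f) (π : Equiv.Perm (Fin n)) :
    Fin m → Fin m :=
  fun k => ((windowSet f π).orderIsoOfFin (windowSet_card hf π)).symm
    ⟨π (f k), mem_windowSet k⟩

lemma patFun_injective (f : Fin m → Fin n) (hf : Function.Injective f)
    (π : Equiv.Perm (Fin n)) : Function.Injective (patFun f hf π) := by
  intro k l h
  have := congrArg (fun x => (((windowSet f π).orderIsoOfFin (windowSet_card hf π)) x : Fin n)) h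
  simp only [patFun, OrderIso.apply_symm_apply] at this
  exact hf (π.injective this)

def pat (f : Fin m → Fin n) (hf : Function.Injective f) (π : Equiv.Perm (Fin n)) :
    Equiv.Perm (Fin m) :=
  Equiv.ofBijective (patFun f hf π)
    ((Finite.injective_iff_bijective).1 (patFun_injective f hf π))

lemma pat_lt_iff (f : Fin m → Fin n) (hf : Function.Injective f) (π : Equiv.Perm (Fin n))
    (k l : Fin m) : pat f hf π k < pat f hf π l ↔ π (f k) < π (f l) := by
  have : ∀ k, ((windowSet f π).orderIsoOfFin (windowSet_card hf π)) (pat f hf π k)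
      = ⟨π (f k), mem_windowSet k⟩ := by
    intro k
    simp [pat, Equiv.ofBijective, patFun]
  rw [← OrderIso.lt_iff_lt ((windowSet f π).orderIsoOfFin (windowSet_card hf π)),
    this, this]
  rfl

lemma pat_eq_iff (f : Fin m → Fin n) (hf : Function.Injective f) (π : Equiv.Perm (Fin n))
    (σ : Equiv.Perm (Fin m)) :
    pat f hf π = σ ↔ ∀ k l, π (f k) < π (f l) ↔ σ k < σ l := by
  constructor
  · rintro rfl k l; exact (pat_lt_iff f hf π k l).symm
  · intro h
    refine perm_eq_of_lt_iff _ _ (fun k l => ?_)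
    rw [pat_lt_iff f hf π k l, h k l]


/-- the order isomorphism `Fin m ≃o windowSet f π` -/
def wIso (f : Fin m → Fin n) (hf : Function.Injective f) (π : Equiv.Perm (Fin n)) :
    Fin m ≃o {x // x ∈ windowSet f π} :=
  (windowSet f π).orderIsoOfFin (windowSet_card hf π)

/-- the permutation of `Fin n` acting as `τ` (via `wIso`) on the window values of `π`. -/
def wPerm (f : Fin m → Fin n) (hf : Function.Injective f) (τ : Equiv.Perm (Fin m))
    (π : Equiv.Perm (Fin n)) : Equiv.Perm (Fin n) :=
  τ.extendDomain (wIso f hf π).toEquiv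

def winPerm (f : Fin m → Fin n) (hf : Function.Injective f) (τ : Equiv.Perm (Fin m))
    (π : Equiv.Perm (Fin n)) : Equiv.Perm (Fin n) :=
  (wPerm f hf τ π) * π

lemma wPerm_apply_not_mem {f : Fin m → Fin n} (hf : Function.Injective f)
    {τ : Equiv.Perm (Fin m)} {π : Equiv.Perm (Fin n)} {x : Fin n}
    (hx : x ∉ windowSet f π) : wPerm f hf τ π x = x :=
  Equiv.Perm.extendDomain_apply_not_subtype τ (wIso f hf π).toEquiv hx

lemma wPerm_apply_mem {f : Fin m → Fin n} (hf : Function.Injective f)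
    {τ : Equiv.Perm (Fin m)} {π : Equiv.Perm (Fin n)} {x : Fin n}
    (hx : x ∈ windowSet f π) :
    wPerm f hf τ π x = (wIso f hf π (τ ((wIso f hf π).symm ⟨x, hx⟩)) : Fin n) :=
  Equiv.Perm.extendDomain_apply_subtype τ (wIso f hf π).toEquiv hx

lemma wPerm_mem {f : Fin m → Fin n} (hf : Function.Injective f)
    {τ : Equiv.Perm (Fin m)} {π : Equiv.Perm (Fin n)} {x : Fin n} :
    wPerm f hf τ π x ∈ windowSet f π ↔ x ∈ windowSet f π := by
  constructor
  · intro h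
    by_contra hx
    rw [wPerm_apply_not_mem hf hx] at h; exact hx h
  · intro hx
    rw [wPerm_apply_mem hf hx]
    exact ((wIso f hf π) (τ ((wIso f hf π).symm ⟨x, hx⟩))).2

lemma winPerm_apply (f : Fin m → Fin n) (hf : Function.Injective f) (τ : Equiv.Perm (Fin m))
    (π : Equiv.Perm (Fin n)) (k : Fin m) :
    winPerm f hf τ π (f k) = (wIso f hf π (τ (pat f hf π k)) : Fin n) := by
  have : winPerm f hf τ π (f k) = wPerm f hf τ π (π (f k)) := rfl
  rw [this, wPerm_apply_mem hf (mem_windowSet k)]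
  rfl

lemma windowSet_winPerm (f : Fin m → Fin n) (hf : Function.Injective f)
    (τ : Equiv.Perm (Fin m)) (π : Equiv.Perm (Fin n)) :
    windowSet f (winPerm f hf τ π) = windowSet f π := by
  apply Finset.eq_of_subset_of_card_le
  · intro x hx
    rcases Finset.mem_image.1 hx with ⟨k, -, rfl⟩
    have : winPerm f hf τ π (f k) = wPerm f hf τ π (π (f k)) := rfl
    rw [this]
    exact wPerm_mem hf |>.2 (mem_windowSet k)
  · rw [windowSet_card hf, windowSet_card hf]

lemma pat_winPerm (f : Fin m → Fin n) (hf : Function.Injective f)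
    (τ : Equiv.Perm (Fin m)) (π : Equiv.Perm (Fin n)) :
    pat f hf (winPerm f hf τ π) = τ * pat f hf π := by
  rw [pat_eq_iff]
  intro k l
  rw [winPerm_apply, winPerm_apply, Subtype.coe_lt_coe, OrderIso.lt_iff_lt]
  rfl

lemma winPerm_one (f : Fin m → Fin n) (hf : Function.Injective f) (π : Equiv.Perm (Fin n)) :
    winPerm f hf 1 π = π := by
  rw [winPerm, wPerm, Equiv.Perm.extendDomain_one, one_mul]

lemma winPerm_mul (f : Fin m → Fin n) (hf : Function.Injective f)
    (τ' τ : Equiv.Perm (Fin m)) (π : Equiv.Perm (Fin n)) :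
    winPerm f hf τ' (winPerm f hf τ π) = winPerm f hf (τ' * τ) π := by
  apply Equiv.ext
  intro x
  have hs := windowSet_winPerm f hf τ π
  show wPerm f hf τ' (winPerm f hf τ π) (wPerm f hf τ π (π x))
      = wPerm f hf (τ' * τ) π (π x)
  set y := π x with hy
  by_cases hx : y ∈ windowSet f π
  · rw [wPerm_apply_mem hf hx]
    set z := ((wIso f hf π) (τ ((wIso f hf π).symm ⟨y, hx⟩)) : Fin n) with hz
    have hzmem : z ∈ windowSet f π := ((wIso f hf π) (τ ((wIso f hf π).symm ⟨y, hx⟩))).2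
    have hzmem' : z ∈ windowSet f (winPerm f hf τ π) := hs ▸ hzmem
    rw [wPerm_apply_mem hf hzmem', wPerm_apply_mem hf hx]
    -- now need compatibility of wIso for winPerm and π, via hs
    have hcoe : ∀ j : Fin m, ((wIso f hf (winPerm f hf τ π)) j : Fin n) = ((wIso f hf π) j : Fin n) :=
      fun j => oif_coe hs _ _ j
    have hsymm : ∀ (x : Fin n) (h1 : x ∈ windowSet f (winPerm f hf τ π)) (h2 : x ∈ windowSet f π),
        (wIso f hf (winPerm f hf τ π)).symm ⟨x, h1⟩ = (wIso f hf π).symm ⟨x, h2⟩ := by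
      intro x h1 h2
      apply (wIso f hf π).injective
      apply Subtype.ext
      rw [← hcoe]
      simp
    rw [hcoe, hsymm z hzmem' hzmem]
    have : (wIso f hf π).symm ⟨z, hzmem⟩ = τ ((wIso f hf π).symm ⟨y, hx⟩) := by
      apply (wIso f hf π).injective; apply Subtype.ext; simp [hz]
    rw [this]
    rfl
  · have hx' : y ∉ windowSet f (winPerm f hf τ π) := hs ▸ hx
    rw [wPerm_apply_not_mem hf hx, wPerm_apply_not_mem hf hx', wPerm_apply_not_mem hf hx]


section Consec

variable {n m i : ℕ}

def consecF (n i m : ℕ) (h : i + m ≤ n) : Fin m → Fin n :=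
  fun k => ⟨i + k.val, by have := k.isLt; omega⟩

lemma consecF_strictMono (h : i + m ≤ n) : StrictMono (consecF n i m h) := by
  intro a b hab
  simp only [consecF, Fin.mk_lt_mk]
  have := Fin.lt_def.1 hab
  omega

lemma consecF_injective (h : i + m ≤ n) : Function.Injective (consecF n i m h) :=
  (consecF_strictMono h).injective

def consecW (n i m : ℕ) (h : i + m ≤ n) : Finset (Fin n) :=
  Finset.univ.image (consecF n i m h)

lemma mem_consecW (h : i + m ≤ n) (x : Fin n) :
    x ∈ consecW n i m h ↔ i ≤ x.val ∧ x.val < i + m := by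
  constructor
  · intro hx
    rcases Finset.mem_image.1 hx with ⟨k, -, rfl⟩
    have := k.isLt
    simp only [consecF]
    omega
  · rintro ⟨h1, h2⟩
    refine Finset.mem_image.2 ⟨⟨x.val - i, by omega⟩, Finset.mem_univ _, ?_⟩
    apply Fin.ext
    simp only [consecF]
    omega

/-- inversions not entirely within the window -/
def rCount (h : i + m ≤ n) (π : Equiv.Perm (Fin n)) : ℕ :=
  (Finset.univ.filter fun p : Fin n × Fin n =>
    (p.1 < p.2 ∧ π p.2 < π p.1) ∧ ¬(p.1 ∈ consecW n i m h ∧ p.2 ∈ consecW n i m h)).card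

lemma invCount_decomp (h : i + m ≤ n) (π : Equiv.Perm (Fin n)) :
    invCount π = invCount (pat (consecF n i m h) (consecF_injective h) π) + rCount h π := by
  classical
  set f := consecF n i m h
  set hf := consecF_injective h
  have hsplit := Finset.card_filter_add_card_filter_not
    (s := Finset.univ.filter fun p : Fin n × Fin n => p.1 < p.2 ∧ π p.2 < π p.1)
    (fun p : Fin n × Fin n => p.1 ∈ consecW n i m h ∧ p.2 ∈ consecW n i m h)
  rw [Finset.filter_filter, Finset.filter_filter] at hsplit
  have hwin : (Finset.univ.filter fun p : Fin n × Fin n =>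
      (p.1 < p.2 ∧ π p.2 < π p.1) ∧ (p.1 ∈ consecW n i m h ∧ p.2 ∈ consecW n i m h)).card
      = invCount (pat f hf π) := by
    rw [invCount]
    symm
    apply Finset.card_bij (i := fun (p : Fin m × Fin m) _ => (f p.1, f p.2))
    · rintro ⟨k, l⟩ hkl
      simp only [Finset.mem_filter, Finset.mem_univ, true_and] at hkl ⊢
      obtain ⟨h1, h2⟩ := hkl
      refine ⟨⟨(consecF_strictMono h) h1, (pat_lt_iff f hf π l k).1 h2⟩, ?_, ?_⟩
      · exact Finset.mem_image.2 ⟨k, Finset.mem_univ _, rfl⟩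
      · exact Finset.mem_image.2 ⟨l, Finset.mem_univ _, rfl⟩
    · rintro ⟨k, l⟩ - ⟨k', l'⟩ - hkl
      simp only [Prod.mk.injEq] at hkl
      exact Prod.ext (hf hkl.1) (hf hkl.2)
    · rintro ⟨a, b⟩ hab
      simp only [Finset.mem_filter, Finset.mem_univ, true_and] at hab
      obtain ⟨⟨h1, h2⟩, ha, hb⟩ := hab
      obtain ⟨ka, -, hka⟩ := Finset.mem_image.1 ha
      obtain ⟨kb, -, hkb⟩ := Finset.mem_image.1 hb
      refine ⟨(ka, kb), ?_, by simp only [Prod.mk.injEq]; exact ⟨hka, hkb⟩⟩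
      simp only [Finset.mem_filter, Finset.mem_univ, true_and]
      subst hka; subst hkb
      constructor
      · exact (consecF_strictMono h).lt_iff_lt.1 h1
      · exact (pat_lt_iff f hf π kb ka).2 h2
  rw [invCount, ← hsplit, hwin, rCount]

lemma pos_apply_eq_of_not_mem (h : i + m ≤ n) {τ : Equiv.Perm (Fin m)}
    {π : Equiv.Perm (Fin n)} {x : Fin n} (hx : x ∉ consecW n i m h) :
    winPerm (consecF n i m h) (consecF_injective h) τ π x = π x := by
  set f := consecF n i m h
  set hf := consecF_injective h
  have hpx : π x ∉ windowSet f π := by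
    intro hmem
    rcases Finset.mem_image.1 hmem with ⟨k, -, hk⟩
    have : x = f k := π.injective hk.symm
    exact hx (this ▸ Finset.mem_image.2 ⟨k, Finset.mem_univ _, rfl⟩)
  show wPerm f hf τ π (π x) = π x
  exact wPerm_apply_not_mem hf hpx

lemma mem_consecW_iff_val_mem (h : i + m ≤ n) (π : Equiv.Perm (Fin n)) (x : Fin n) :
    x ∈ consecW n i m h ↔ π x ∈ windowSet (consecF n i m h) π := by
  constructor
  · intro hx
    rcases Finset.mem_image.1 hx with ⟨k, -, rfl⟩
    exact mem_windowSet k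
  · intro hx
    rcases Finset.mem_image.1 hx with ⟨k, -, hk⟩
    have : x = consecF n i m h k := π.injective hk.symm
    exact this ▸ Finset.mem_image.2 ⟨k, Finset.mem_univ _, rfl⟩

lemma rCount_winPerm (h : i + m ≤ n) (τ : Equiv.Perm (Fin m)) (π : Equiv.Perm (Fin n)) :
    rCount h (winPerm (consecF n i m h) (consecF_injective h) τ π) = rCount h π := by
  classical
  set f := consecF n i m h
  set hf := consecF_injective h
  set π' := winPerm f hf τ π with hπ'
  set W := consecW n i m h with hW
  -- the position rearrangement maps
  set ψ : Fin n → Fin n := fun x => if x ∈ W then π'.symm (π x) else x with hψ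
  set ψ' : Fin n → Fin n := fun x => if x ∈ W then π.symm (π' x) else x with hψ'
  -- key facts
  have key1 : ∀ x, π' (ψ x) = π x := by
    intro x
    by_cases hx : x ∈ W
    · simp [hψ, hx]
    · simp [hψ, hx, pos_apply_eq_of_not_mem h hx]; exact pos_apply_eq_of_not_mem h hx
  have key1' : ∀ x, π (ψ' x) = π' x := by
    intro x
    by_cases hx : x ∈ W
    · simp [hψ', hx]
    · simp [hψ', hx, pos_apply_eq_of_not_mem h hx]; exact (pos_apply_eq_of_not_mem h hx).symm
  have ws_eq : windowSet f π' = windowSet f π := windowSet_winPerm f hf τ π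
  have key2 : ∀ x, ψ x ∈ W ↔ x ∈ W := by
    intro x
    by_cases hx : x ∈ W
    · simp only [hψ, if_pos hx]
      rw [mem_consecW_iff_val_mem h π' (π'.symm (π x)), Equiv.apply_symm_apply, ws_eq,
        ← mem_consecW_iff_val_mem h π x]
    · simp [hψ, hx]
  have key2' : ∀ x, ψ' x ∈ W ↔ x ∈ W := by
    intro x
    by_cases hx : x ∈ W
    · simp only [hψ', if_pos hx]
      rw [mem_consecW_iff_val_mem h π (π.symm (π' x)), Equiv.apply_symm_apply,
        ← ws_eq, ← mem_consecW_iff_val_mem h π' x]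
    · simp [hψ', hx]
  have key3 : ∀ x, ψ' (ψ x) = x := by
    intro x
    by_cases hx : x ∈ W
    · have : ψ x ∈ W := (key2 x).2 hx
      simp only [hψ', if_pos this, key1 x]
      simp [hψ, hx]
    · have : ψ x = x := by simp [hψ, hx]
      rw [this]; simp [hψ', hx]
  have key3' : ∀ x, ψ (ψ' x) = x := by
    intro x
    by_cases hx : x ∈ W
    · have : ψ' x ∈ W := (key2' x).2 hx
      simp only [hψ, if_pos this, key1' x]
      simp [hψ', hx]
    · have : ψ' x = x := by simp [hψ', hx]
      rw [this]; simp [hψ, hx]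
  -- order preservation on non-window pairs
  have key4 : ∀ (g : Fin n → Fin n), (∀ x, g x ∈ W ↔ x ∈ W) → (∀ x, x ∉ W → g x = x) →
      ∀ a b : Fin n, a < b → ¬(a ∈ W ∧ b ∈ W) → g a < g b := by
    intro g hgW hgid a b hab hnab
    by_cases ha : a ∈ W
    · have hb : b ∉ W := fun hb => hnab ⟨ha, hb⟩
      rw [hgid b hb]
      have hga : g a ∈ W := (hgW a).2 ha
      rw [mem_consecW h] at ha hga
      rw [mem_consecW h] at hb
      have : i + m ≤ b.val := by
        have hab' : a.val < b.val := hab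
        omega
      have : (g a).val < b.val := by omega
      exact this
    · rw [hgid a ha]
      by_cases hb : b ∈ W
      · have hgb : g b ∈ W := (hgW b).2 hb
        rw [mem_consecW h] at hb hgb
        rw [mem_consecW h] at ha
        have : a.val < i := by
          have hab' : a.val < b.val := hab
          omega
        have : a.val < (g b).val := by omega
        exact this
      · rw [hgid b hb]; exact hab
  have hψid : ∀ x, x ∉ W → ψ x = x := fun x hx => by simp [hψ, hx]
  have hψ'id : ∀ x, x ∉ W → ψ' x = x := fun x hx => by simp [hψ', hx]
  rw [rCount, rCount]
  apply Finset.card_nbij' (i := fun p : Fin n × Fin n => (ψ' p.1, ψ' p.2))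
    (j := fun p : Fin n × Fin n => (ψ p.1, ψ p.2))
  · rintro ⟨a, b⟩ hab
    simp only [Finset.mem_coe, Finset.mem_filter, Finset.mem_univ, true_and] at hab ⊢
    obtain ⟨⟨h1, h2⟩, h3⟩ := hab
    refine ⟨⟨key4 ψ' key2' hψ'id a b h1 h3, ?_⟩, ?_⟩
    · rw [key1', key1']; exact h2
    · rw [key2', key2']; exact h3
  · rintro ⟨a, b⟩ hab
    simp only [Finset.mem_coe, Finset.mem_filter, Finset.mem_univ, true_and] at hab ⊢
    obtain ⟨⟨h1, h2⟩, h3⟩ := hab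
    refine ⟨⟨key4 ψ key2 hψid a b h1 h3, ?_⟩, ?_⟩
    · rw [key1, key1]; exact h2
    · rw [key2, key2]; exact h3
  · rintro ⟨a, b⟩ -; simp only [Prod.mk.injEq]; exact ⟨key3' a, key3' b⟩
  · rintro ⟨a, b⟩ -; simp only [Prod.mk.injEq]; exact ⟨key3 a, key3 b⟩

lemma invCount_one : invCount (1 : Equiv.Perm (Fin m)) = 0 := by
  rw [invCount]
  convert Finset.card_empty
  rw [Finset.eq_empty_iff_forall_notMem]
  rintro ⟨a, b⟩ hab
  simp only [Finset.mem_filter, Finset.mem_univ, true_and] at hab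
  exact absurd hab.2 (not_lt.2 hab.1.le)

lemma invCount_winPerm (h : i + m ≤ n) (τ : Equiv.Perm (Fin m)) (π : Equiv.Perm (Fin n))
    (hπ : pat (consecF n i m h) (consecF_injective h) π = 1) :
    invCount (winPerm (consecF n i m h) (consecF_injective h) τ π)
      = invCount τ + invCount π := by
  have d1 := invCount_decomp h π
  have d2 := invCount_decomp h (winPerm (consecF n i m h) (consecF_injective h) τ π)
  rw [pat_winPerm, hπ, mul_one] at d2
  rw [hπ, invCount_one, zero_add] at d1
  rw [d2, rCount_winPerm h τ π, d1]

end Consec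


section GenFun

variable {n : ℕ}

def ins (p : Equiv.Perm (Fin n) × Fin (n + 1)) : Equiv.Perm (Fin (n + 1)) :=
  ((finSuccEquiv' (Fin.last n)).trans (Equiv.optionCongr p.1)).trans (finSuccEquiv' p.2).symm

lemma ins_last (p : Equiv.Perm (Fin n) × Fin (n + 1)) : ins p (Fin.last n) = p.2 := by
  simp [ins, finSuccEquiv'_at]

lemma ins_castSucc (p : Equiv.Perm (Fin n) × Fin (n + 1)) (k : Fin n) :
    ins p k.castSucc = p.2.succAbove (p.1 k) := by
  have h1 : finSuccEquiv' (Fin.last n) k.castSucc = some k := by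
    rw [← Fin.succAbove_last, finSuccEquiv'_succAbove]
  simp [ins, h1, finSuccEquiv'_symm_some]

lemma ins_bijective : Function.Bijective (ins (n := n)) := by
  rw [Fintype.bijective_iff_injective_and_card]
  constructor
  · rintro ⟨τ, v⟩ ⟨τ', v'⟩ hp
    have hv : v = v' := by
      have h1 : ins (τ, v) (Fin.last n) = v := ins_last (τ, v)
      have h2 : ins (τ', v') (Fin.last n) = v' := ins_last (τ', v')
      rw [← h1, ← h2, hp]
    subst hv
    have hτ : τ = τ' := by
      apply Equiv.ext; intro k
      apply Fin.succAbove_right_injective (p := v)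
      have := congrFun (congrArg (fun e => (e : Equiv.Perm (Fin (n+1))).toFun) hp) k.castSucc
      simpa [ins_castSucc (τ, v) k, ins_castSucc (τ', v) k] using
        (show (τ, v).2.succAbove ((τ, v).1 k) = (τ', v).2.succAbove ((τ', v).1 k) by rw [← ins_castSucc (τ, v) k, ← ins_castSucc (τ', v) k, hp])
    rw [hτ]
  · rw [Fintype.card_prod, Fintype.card_perm, Fintype.card_perm,
      Fintype.card_fin, Fintype.card_fin]
    rw [Nat.factorial_succ]
    exact Nat.mul_comm _ _

lemma card_filter_le_castSucc (v : Fin (n + 1)) :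
    (Finset.univ.filter fun j : Fin n => v ≤ j.castSucc).card = n - v.val := by
  have : (Finset.univ.filter fun j : Fin n => v ≤ j.castSucc).card
      = Fintype.card (Fin (n - v.val)) := by
    rw [← Finset.card_univ]
    apply Finset.card_bij (i := fun j hj => (⟨j.val - v.val, by
      simp only [Finset.mem_filter, Finset.mem_univ, true_and, Fin.le_def,
        Fin.coe_castSucc] at hj
      have := j.isLt; omega⟩ : Fin (n - v.val)))
    · intro j hj; exact Finset.mem_univ _
    · intro j hj j' hj' he
      simp only [Finset.mem_filter, Finset.mem_univ, true_and, Fin.le_def,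
        Fin.coe_castSucc] at hj hj'
      have hval : j.val - v.val = j'.val - v.val := congrArg Fin.val he
      apply Fin.ext
      omega
    · intro b hb
      have hbv := b.isLt
      refine ⟨⟨b.val + v.val, by omega⟩, ?_, ?_⟩
      · simp only [Finset.mem_filter, Finset.mem_univ, true_and, Fin.le_def,
          Fin.coe_castSucc]
        omega
      · apply Fin.ext; simp
  rw [this, Fintype.card_fin]

lemma invCount_ins (p : Equiv.Perm (Fin n) × Fin (n + 1)) :
    invCount (ins p) = invCount p.1 + (n - p.2.val) := by
  obtain ⟨τ, v⟩ := p
  show invCount (ins (τ, v)) = invCount τ + (n - v.val)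
  set π := ins (τ, v) with hπdef
  have hlast : π (Fin.last n) = v := ins_last (τ, v)
  have hcs : ∀ k, π k.castSucc = v.succAbove (τ k) := fun k => ins_castSucc (τ, v) k
  rw [invCount]
  have hsplit := Finset.card_filter_add_card_filter_not
    (s := Finset.univ.filter fun q : Fin (n+1) × Fin (n+1) => q.1 < q.2 ∧ π q.2 < π q.1)
    (fun q : Fin (n+1) × Fin (n+1) => q.2 = Fin.last n)
  rw [Finset.filter_filter, Finset.filter_filter] at hsplit
  have hA : (Finset.univ.filter fun q : Fin (n+1) × Fin (n+1) =>
      (q.1 < q.2 ∧ π q.2 < π q.1) ∧ q.2 = Fin.last n).card = n - v.val := by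
    rw [← card_filter_le_castSucc v]
    symm
    apply Finset.card_bij (i := fun (j : Fin n) _ => ((τ.symm j).castSucc, Fin.last n))
    · intro j hj
      simp only [Finset.mem_filter, Finset.mem_univ, true_and, Fin.le_def,
        Fin.coe_castSucc] at hj
      simp only [Finset.mem_filter, Finset.mem_univ, true_and]
      refine ⟨⟨Fin.castSucc_lt_last _, ?_⟩, trivial⟩
      rw [hlast, hcs, Equiv.apply_symm_apply]
      rw [Fin.lt_succAbove_iff_le_castSucc]
      exact Fin.le_def.2 hj
    · intro j hj j' hj' he
      simp only [Prod.mk.injEq] at he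
      exact τ.symm.injective (Fin.castSucc_injective _ he.1)
    · rintro ⟨a, b⟩ hab
      simp only [Finset.mem_filter, Finset.mem_univ, true_and] at hab
      obtain ⟨⟨h1, h2⟩, rfl⟩ := hab
      obtain ⟨k, rfl⟩ := Fin.eq_castSucc_of_ne_last (Fin.ne_last_of_lt h1)
      refine ⟨τ k, ?_, ?_⟩
      · simp only [Finset.mem_filter, Finset.mem_univ, true_and]
        rw [hlast, hcs] at h2
        rw [← Fin.lt_succAbove_iff_le_castSucc]
        exact h2
      · simp
  have hB : (Finset.univ.filter fun q : Fin (n+1) × Fin (n+1) =>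
      (q.1 < q.2 ∧ π q.2 < π q.1) ∧ ¬(q.2 = Fin.last n)).card = invCount τ := by
    rw [invCount]
    symm
    apply Finset.card_bij (i := fun (p : Fin n × Fin n) _ => (p.1.castSucc, p.2.castSucc))
    · rintro ⟨k, l⟩ hkl
      simp only [Finset.mem_filter, Finset.mem_univ, true_and] at hkl ⊢
      obtain ⟨h1, h2⟩ := hkl
      refine ⟨⟨Fin.castSucc_lt_castSucc_iff.2 h1, ?_⟩, Fin.ne_last_of_lt (Fin.castSucc_lt_last _)⟩
      rw [hcs, hcs]
      exact Fin.succAbove_lt_succAbove_iff.2 h2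
    · rintro ⟨k, l⟩ - ⟨k', l'⟩ - he
      simp only [Prod.mk.injEq] at he
      exact Prod.ext (Fin.castSucc_injective _ he.1) (Fin.castSucc_injective _ he.2)
    · rintro ⟨a, b⟩ hab
      simp only [Finset.mem_filter, Finset.mem_univ, true_and] at hab
      obtain ⟨⟨h1, h2⟩, hb⟩ := hab
      obtain ⟨l, rfl⟩ := Fin.eq_castSucc_of_ne_last hb
      obtain ⟨k, rfl⟩ := Fin.eq_castSucc_of_ne_last
        (Fin.ne_last_of_lt (lt_of_lt_of_le h1 (Fin.castSucc_lt_last l).le))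
      refine ⟨(k, l), ?_, rfl⟩
      simp only [Finset.mem_filter, Finset.mem_univ, true_and]
      rw [hcs, hcs] at h2
      exact ⟨Fin.castSucc_lt_castSucc_iff.1 h1, Fin.succAbove_lt_succAbove_iff.1 h2⟩
  omega

lemma invCount_zero_perm (σ : Equiv.Perm (Fin 0)) : invCount σ = 0 := by
  rw [invCount]
  apply Finset.card_eq_zero.mpr
  exact Finset.eq_empty_of_forall_notMem (fun p _ => p.1.elim0)

lemma sum_q_inv (q : ℝ) : ∀ n : ℕ,
    ∑ σ : Equiv.Perm (Fin n), q ^ invCount σ = invPoly n q := by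
  intro n
  induction n with
  | zero =>
    rw [invPoly]
    simp only [Finset.range_zero, Finset.prod_empty]
    rw [Finset.sum_congr rfl (fun σ _ => by rw [invCount_zero_perm σ, pow_zero])]
    rw [Finset.sum_const, Finset.card_univ, Fintype.card_perm, Fintype.card_fin]
    norm_num
  | succ n ih =>
    have hbij := Equiv.sum_comp (Equiv.ofBijective ins ins_bijective)
      (fun σ : Equiv.Perm (Fin (n+1)) => q ^ invCount σ)
    rw [← hbij]
    have : ∀ p : Equiv.Perm (Fin n) × Fin (n + 1),
        q ^ invCount (Equiv.ofBijective ins ins_bijective p)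
          = q ^ invCount p.1 * q ^ (n - p.2.val) := by
      intro p
      rw [Equiv.ofBijective_apply, invCount_ins, pow_add]
    rw [Finset.sum_congr rfl (fun p _ => this p), Fintype.sum_prod_type]
    simp only [← Finset.sum_mul, ← Finset.mul_sum]
    rw [ih]
    have hv : ∑ v : Fin (n + 1), q ^ (n - v.val) = ∑ i ∈ Finset.range (n + 1), q ^ i := by
      rw [Fin.sum_univ_eq_sum_range (fun i => q ^ (n - i)) (n + 1)]
      have := Finset.sum_range_reflect (fun i => q ^ i) (n + 1)
      simp only [Nat.add_sub_cancel] at this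
      rw [← this]
    rw [hv, invPoly, invPoly, Finset.prod_range_succ]

end GenFun


section Fibers

variable {m n : ℕ}

lemma fiber_card_eq (f : Fin m → Fin n) (hf : Function.Injective f) (σ : Equiv.Perm (Fin m)) :
    (Finset.univ.filter fun π : Equiv.Perm (Fin n) => pat f hf π = σ).card
      = (Finset.univ.filter fun π : Equiv.Perm (Fin n) => pat f hf π = 1).card := by
  symm
  apply Finset.card_nbij' (i := winPerm f hf σ) (j := winPerm f hf σ⁻¹)
  · intro π hπ
    simp only [Finset.mem_coe, Finset.mem_filter, Finset.mem_univ, true_and] at hπ ⊢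
    rw [pat_winPerm, hπ, mul_one]
  · intro π hπ
    simp only [Finset.mem_coe, Finset.mem_filter, Finset.mem_univ, true_and] at hπ ⊢
    rw [pat_winPerm, hπ, inv_mul_cancel]
  · intro π _
    rw [winPerm_mul, inv_mul_cancel, winPerm_one]
  · intro π _
    rw [winPerm_mul, mul_inv_cancel, winPerm_one]

lemma fiber_card_mul (f : Fin m → Fin n) (hf : Function.Injective f)
    (σ : Equiv.Perm (Fin m)) :
    m.factorial * (Finset.univ.filter fun π : Equiv.Perm (Fin n) => pat f hf π = σ).card
      = n.factorial := by
  have hs := Finset.sum_fiberwise (Finset.univ : Finset (Equiv.Perm (Fin n)))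
    (pat f hf) (fun _ => (1 : ℕ))
  simp only [Finset.sum_const, smul_eq_mul, mul_one, Finset.card_univ] at hs
  rw [Fintype.card_perm, Fintype.card_fin] at hs
  have heach : ∀ τ : Equiv.Perm (Fin m),
      (Finset.univ.filter fun π : Equiv.Perm (Fin n) => pat f hf π = τ).card
        = (Finset.univ.filter fun π : Equiv.Perm (Fin n) => pat f hf π = σ).card := by
    intro τ
    rw [fiber_card_eq f hf τ, fiber_card_eq f hf σ]
  rw [Finset.sum_congr rfl (fun τ _ => heach τ), Finset.sum_const, Finset.card_univ,
    Fintype.card_perm, Fintype.card_fin, smul_eq_mul] at hs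
  exact hs

lemma invPoly_pos {q : ℝ} (hq : 0 < q) (n : ℕ) : 0 < invPoly n q := by
  rw [invPoly]
  apply Finset.prod_pos
  intro j _
  apply Finset.sum_pos
  · intro i _; exact pow_pos hq i
  · exact Finset.nonempty_range_iff.2 (Nat.succ_ne_zero j)

lemma fiber_sum_q {i : ℕ} (h : i + m ≤ n) (q : ℝ) (σ : Equiv.Perm (Fin m)) :
    (∑ π ∈ Finset.univ.filter
        (fun π : Equiv.Perm (Fin n) => pat (consecF n i m h) (consecF_injective h) π = σ),
      q ^ invCount π)
    = q ^ invCount σ * (∑ π ∈ Finset.univ.filter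
        (fun π : Equiv.Perm (Fin n) => pat (consecF n i m h) (consecF_injective h) π = 1),
      q ^ invCount π) := by
  set f := consecF n i m h
  set hf := consecF_injective h
  rw [Finset.mul_sum]
  symm
  apply Finset.sum_nbij' (i := winPerm f hf σ) (j := winPerm f hf σ⁻¹)
  · intro π hπ
    simp only [Finset.mem_filter, Finset.mem_univ, true_and] at hπ ⊢
    rw [pat_winPerm, hπ, mul_one]
  · intro π hπ
    simp only [Finset.mem_filter, Finset.mem_univ, true_and] at hπ ⊢
    rw [pat_winPerm, hπ, inv_mul_cancel]
  · intro π _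
    rw [winPerm_mul, inv_mul_cancel, winPerm_one]
  · intro π _
    rw [winPerm_mul, mul_inv_cancel, winPerm_one]
  · intro π hπ
    simp only [Finset.mem_filter, Finset.mem_univ, true_and] at hπ
    rw [invCount_winPerm h σ π hπ, pow_add]

lemma fiber_sum_total {i : ℕ} (h : i + m ≤ n) (q : ℝ) :
    invPoly m q * (∑ π ∈ Finset.univ.filter
        (fun π : Equiv.Perm (Fin n) => pat (consecF n i m h) (consecF_injective h) π = 1),
      q ^ invCount π) = invPoly n q := by
  have hs := Finset.sum_fiberwise (Finset.univ : Finset (Equiv.Perm (Fin n)))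
    (pat (consecF n i m h) (consecF_injective h)) (fun π => q ^ invCount π)
  rw [sum_q_inv q n] at hs
  rw [Finset.sum_congr rfl (fun τ _ => fiber_sum_q h q τ), ← Finset.sum_mul,
    sum_q_inv q m] at hs
  exact hs

lemma mallowsProb_eq_of {q : ℝ} (E : Set (Equiv.Perm (Fin n)))
    (P : Equiv.Perm (Fin n) → Prop) [DecidablePred P] (hEP : ∀ π, π ∈ E ↔ P π) :
    mallowsProb q E = (∑ π ∈ Finset.univ.filter P, q ^ invCount π) / invPoly n q := by
  rw [mallowsProb]
  congr 1
  apply Finset.sum_congr ?_ (fun _ _ => rfl)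
  ext π
  simp only [Finset.mem_filter, Finset.mem_univ, true_and]
  exact hEP π

lemma mallows_consec {i : ℕ} (h : i + m ≤ n) {q : ℝ} (hq : 0 < q) (σ : Equiv.Perm (Fin m)) :
    mallowsProb q {π : Equiv.Perm (Fin n) |
        pat (consecF n i m h) (consecF_injective h) π = σ}
      = q ^ invCount σ / invPoly m q := by
  rw [mallowsProb_eq_of {π : Equiv.Perm (Fin n) |
      pat (consecF n i m h) (consecF_injective h) π = σ} (fun π : Equiv.Perm (Fin n) =>
    pat (consecF n i m h) (consecF_injective h) π = σ) (fun π => Iff.rfl)]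
  have key : (∑ π ∈ Finset.univ.filter
      (fun π : Equiv.Perm (Fin n) => pat (consecF n i m h) (consecF_injective h) π = σ),
      q ^ invCount π) / invPoly n q = q ^ invCount σ / invPoly m q := by
    rw [fiber_sum_q h q σ]
    set T := (∑ π ∈ Finset.univ.filter
        (fun π : Equiv.Perm (Fin n) => pat (consecF n i m h) (consecF_injective h) π = 1),
      q ^ invCount π) with hT
    have htot : invPoly m q * T = invPoly n q := fiber_sum_total h q
    have hnpos := invPoly_pos hq n
    have hTne : T ≠ 0 := by
      intro h0
      rw [h0, mul_zero] at htot
      exact absurd htot.symm (ne_of_gt hnpos)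
    rw [← htot, mul_comm (invPoly m q) T, mul_comm (q ^ invCount σ) T,
      mul_div_mul_left _ _ hTne]
  exact key

lemma invPoly_one (n : ℕ) : invPoly n 1 = (n.factorial : ℝ) := by
  rw [invPoly]
  have : ∀ j : ℕ, (∑ i ∈ Finset.range (j + 1), (1 : ℝ) ^ i) = (j + 1 : ℝ) := by
    intro j
    simp [Finset.sum_const, Finset.card_range]
  rw [Finset.prod_congr rfl (fun j _ => this j)]
  exact_mod_cast Finset.prod_range_add_one_eq_factorial n

lemma mallows_unif (f : Fin m → Fin n) (hf : Function.Injective f) (σ : Equiv.Perm (Fin m)) :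
    mallowsProb 1 {π : Equiv.Perm (Fin n) | pat f hf π = σ}
      = 1 / (m.factorial : ℝ) := by
  rw [mallowsProb_eq_of {π : Equiv.Perm (Fin n) | pat f hf π = σ}
    (fun π : Equiv.Perm (Fin n) => pat f hf π = σ) (fun π => Iff.rfl)]
  have key : (∑ π ∈ Finset.univ.filter
      (fun π : Equiv.Perm (Fin n) => pat f hf π = σ), (1:ℝ) ^ invCount π) / invPoly n 1
      = 1 / (m.factorial : ℝ) := by
    rw [invPoly_one]
    have hsum : (∑ π ∈ Finset.univ.filter
        (fun π : Equiv.Perm (Fin n) => pat f hf π = σ), (1:ℝ) ^ invCount π)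
        = ((Finset.univ.filter (fun π : Equiv.Perm (Fin n) => pat f hf π = σ)).card : ℝ) := by
      simp
    rw [hsum]
    have hkey := fiber_card_mul f hf σ
    set c := (Finset.univ.filter (fun π : Equiv.Perm (Fin n) => pat f hf π = σ)).card with hc
    have hkeyR : (m.factorial : ℝ) * (c : ℝ) = (n.factorial : ℝ) := by
      exact_mod_cast congrArg (fun x : ℕ => (x : ℝ)) hkey
    have hcne : (c : ℝ) ≠ 0 := by
      intro h0
      rw [h0, mul_zero] at hkeyR
      exact Nat.cast_ne_zero.2 (Nat.factorial_ne_zero n) hkeyR.symm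
    rw [← hkeyR, mul_comm]
    rw [eq_div_iff (by positivity)]
    field_simp
  exact key

end Fibers

end Aux

/-- Lemma: the Mallows(q) family is consecutively homogeneous: the reduction of any window
of `m` consecutive positions of a Mallows(q) permutation of `[n]` is Mallows(q) on `S_m`;
moreover for `q = 1` homogeneity holds for arbitrary subsequences. -/
theorem stmt13 (q : ℝ) (hq : 0 < q) :
    (∀ n m i : ℕ, 1 ≤ m → m ≤ n → i + m ≤ n → ∀ σ : Equiv.Perm (Fin m),
      mallowsProb q {πn : Equiv.Perm (Fin n) | OccursConsec σ πn i}
        = q ^ invCount σ / invPoly m q)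
    ∧ (∀ n m : ℕ, ∀ f : Fin m → Fin n, StrictMono f → ∀ σ : Equiv.Perm (Fin m),
      mallowsProb 1 {πn : Equiv.Perm (Fin n) | OccursAt σ πn f}
        = 1 / (m.factorial : ℝ)) := by
  constructor
  · intro n m i hm1 hmn him σ
    have hE : {πn : Equiv.Perm (Fin n) | OccursConsec σ πn i}
        = {πn : Equiv.Perm (Fin n) |
            Aux.pat (Aux.consecF n i m him) (Aux.consecF_injective him) πn = σ} := by
      ext π
      simp only [Set.mem_setOf_eq, OccursConsec]
      constructor
      · rintro ⟨h', hc⟩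
        rw [Aux.pat_eq_iff]
        intro k l
        exact hc k l
      · intro hp
        refine ⟨him, fun k l => ?_⟩
        exact (Aux.pat_eq_iff _ _ _ _).1 hp k l
    rw [hE]
    exact Aux.mallows_consec him hq σ
  · intro n m f hfmono σ
    have hE : {πn : Equiv.Perm (Fin n) | OccursAt σ πn f}
        = {πn : Equiv.Perm (Fin n) | Aux.pat f hfmono.injective πn = σ} := by
      ext π
      simp only [Set.mem_setOf_eq, OccursAt]
      constructor
      · rintro ⟨-, hc⟩
        exact (Aux.pat_eq_iff _ _ _ _).2 hc
      · intro hp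
        exact ⟨hfmono, (Aux.pat_eq_iff _ _ _ _).1 hp⟩
    rw [hE]
    exact Aux.mallows_unif f hfmono.injective σ

end
end

section
/- Fix q > 0 and let Σ_n be a random permutation of [n] from the Mallows(q) distribution. Then Σ_n is weakly dissociated: for any two disjoint blocks of consecutive indices A = {i, i+1, …, i+m−1} and B = {i′, i′+1, …, i′+m′−1} with i+m−1 < i′ and i′+m′−1 ≤ n, and for all σ ∈ S_m and σ′ ∈ S_{m′}, P( red(Σ_{n|A}) = σ and red(Σ_{n|B}) = σ′ ) = P( red(Σ_{n|A}) = σ ) · P( red(Σ_{n|B}) = σ′ ). -/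
open scoped Classical
open Filter

noncomputable section

theorem Equiv.Perm.inv_apply_self {α : Type*} (f : Equiv.Perm α) (x : α) : f⁻¹ (f x) = x :=
  f.symm_apply_apply x

theorem Equiv.Perm.apply_inv_self {α : Type*} (f : Equiv.Perm α) (x : α) : f (f⁻¹ x) = x :=
  f.apply_symm_apply x

/-- permutation of `Fin n` acting as `s` inside the interval `[i, i+m)` and identity outside. -/
def intervalPerm (n i m : ℕ) (h : i + m ≤ n) (s : Equiv.Perm (Fin m)) : Equiv.Perm (Fin n) where
  toFun x := if hx : i ≤ x.val ∧ x.val < i + m then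
      ⟨i + (s ⟨x.val - i, by omega⟩).val, by have := (s ⟨x.val - i, by omega⟩).isLt; omega⟩
    else x
  invFun x := if hx : i ≤ x.val ∧ x.val < i + m then
      ⟨i + (s⁻¹ ⟨x.val - i, by omega⟩).val, by have := (s⁻¹ ⟨x.val - i, by omega⟩).isLt; omega⟩
    else x
  left_inv x := by
    by_cases hx : i ≤ x.val ∧ x.val < i + m
    · have hlt : (s ⟨x.val - i, by omega⟩).val < m := (s _).isLt
      simp only [dif_pos hx]
      split_ifs with h2
      · apply Fin.ext
        simp only [Fin.val_mk, Nat.add_sub_cancel_left, Fin.eta, Equiv.Perm.inv_apply_self]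
        omega
      · exfalso; apply h2; constructor <;> omega
    · simp only [dif_neg hx]
  right_inv x := by
    by_cases hx : i ≤ x.val ∧ x.val < i + m
    · have hlt : (s⁻¹ ⟨x.val - i, by omega⟩).val < m := (s⁻¹ _).isLt
      simp only [dif_pos hx]
      split_ifs with h2
      · apply Fin.ext
        simp only [Fin.val_mk, Nat.add_sub_cancel_left, Fin.eta, Equiv.Perm.apply_inv_self]
        omega
      · exfalso; apply h2; constructor <;> omega
    · simp only [dif_neg hx]

namespace intervalPerm

variable {n i m : ℕ} (h : i + m ≤ n) (s : Equiv.Perm (Fin m))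

lemma apply_of_not_mem {x : Fin n} (hx : ¬ (i ≤ x.val ∧ x.val < i + m)) :
    intervalPerm n i m h s x = x := by
  simp only [intervalPerm, Equiv.coe_fn_mk, dif_neg hx]

lemma val_of_mem {x : Fin n} (hx : i ≤ x.val ∧ x.val < i + m)
    (k : Fin m) (hk : (k : ℕ) = x.val - i) :
    (intervalPerm n i m h s x).val = i + (s k).val := by
  simp only [intervalPerm, Equiv.coe_fn_mk, dif_pos hx, Fin.val_mk]
  congr 3
  apply Fin.ext
  simp only [Fin.val_mk]
  omega

lemma mem_of_mem {x : Fin n} (hx : i ≤ x.val ∧ x.val < i + m) :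
    i ≤ (intervalPerm n i m h s x).val ∧ (intervalPerm n i m h s x).val < i + m := by
  obtain ⟨k, hk⟩ : ∃ k : Fin m, (k : ℕ) = x.val - i := ⟨⟨x.val - i, by omega⟩, rfl⟩
  rw [val_of_mem h s hx k hk]
  exact ⟨Nat.le_add_right _ _, Nat.add_lt_add_left (Fin.isLt _) i⟩

lemma mem_iff (x : Fin n) :
    (i ≤ (intervalPerm n i m h s x).val ∧ (intervalPerm n i m h s x).val < i + m)
      ↔ (i ≤ x.val ∧ x.val < i + m) := by
  by_cases hx : i ≤ x.val ∧ x.val < i + m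
  · exact iff_of_true (mem_of_mem h s hx) hx
  · rw [apply_of_not_mem h s hx]

lemma mul_eq (s t : Equiv.Perm (Fin m)) :
    intervalPerm n i m h s * intervalPerm n i m h t = intervalPerm n i m h (s * t) := by
  apply Equiv.ext
  intro x
  rw [Equiv.Perm.mul_apply]
  apply Fin.ext
  by_cases hx : i ≤ x.val ∧ x.val < i + m
  · obtain ⟨k, hk⟩ : ∃ k : Fin m, (k : ℕ) = x.val - i := ⟨⟨x.val - i, by omega⟩, rfl⟩
    have e1 : (intervalPerm n i m h t x).val = i + (t k).val := val_of_mem h t hx k hk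
    have e2 := mem_of_mem h t hx
    have e3 : (intervalPerm n i m h s (intervalPerm n i m h t x)).val
        = i + (s (t k)).val := val_of_mem h s e2 (t k) (by omega)
    have e4 : (intervalPerm n i m h (s * t) x).val = i + ((s * t) k).val :=
      val_of_mem h (s * t) hx k hk
    rw [e3, e4, Equiv.Perm.mul_apply]
  · rw [apply_of_not_mem h t hx, apply_of_not_mem h s hx, apply_of_not_mem h (s*t) hx]

lemma one_eq : intervalPerm n i m h 1 = 1 := by
  apply Equiv.ext
  intro x
  apply Fin.ext
  by_cases hx : i ≤ x.val ∧ x.val < i + m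
  · obtain ⟨k, hk⟩ : ∃ k : Fin m, (k : ℕ) = x.val - i := ⟨⟨x.val - i, by omega⟩, rfl⟩
    rw [val_of_mem h 1 hx k hk]
    simp only [Equiv.Perm.coe_one, id_eq, Equiv.Perm.one_apply]
    omega
  · rw [apply_of_not_mem h 1 hx]; rfl

lemma lt_of_lt {a b : Fin n} (hab : a < b)
    (hn : ¬ ((i ≤ a.val ∧ a.val < i + m) ∧ (i ≤ b.val ∧ b.val < i + m))) :
    intervalPerm n i m h s a < intervalPerm n i m h s b := by
  have hab' : a.val < b.val := hab
  rw [Fin.lt_def]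
  by_cases ha : i ≤ a.val ∧ a.val < i + m
  · have hb : ¬ (i ≤ b.val ∧ b.val < i + m) := fun hb => hn ⟨ha, hb⟩
    have h2 := mem_of_mem h s ha
    rw [apply_of_not_mem h s hb]
    omega
  · by_cases hb : i ≤ b.val ∧ b.val < i + m
    · have h2 := mem_of_mem h s hb
      rw [apply_of_not_mem h s ha]
      omega
    · rw [apply_of_not_mem h s ha, apply_of_not_mem h s hb]
      exact hab'

end intervalPerm

/-- Both components of the pair lie in the window `[i, i+m)`. -/
def BothIn {n : ℕ} (i m : ℕ) (p : Fin n × Fin n) : Prop :=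
  (i ≤ p.1.val ∧ p.1.val < i + m) ∧ (i ≤ p.2.val ∧ p.2.val < i + m)

lemma invCount_mul_interval {n i m : ℕ} (h : i + m ≤ n) (π : Equiv.Perm (Fin n))
    (s : Equiv.Perm (Fin m))
    (hπ : ∀ k l : Fin m, π ⟨i + k.val, by have := k.isLt; omega⟩
        < π ⟨i + l.val, by have := l.isLt; omega⟩ ↔ k < l) :
    invCount (π * intervalPerm n i m h s) = invCount π + invCount s := by
  set g := intervalPerm n i m h s with hgdef
  set ρ := π * g with hρdef
  have hval : ∀ x, ρ x = π (g x) := fun x => rfl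
  have hginv : ∀ x, intervalPerm n i m h s⁻¹ (g x) = x := by
    intro x
    have : intervalPerm n i m h s⁻¹ * g = 1 := by
      rw [hgdef, intervalPerm.mul_eq, inv_mul_cancel, intervalPerm.one_eq]
    calc intervalPerm n i m h s⁻¹ (g x) = (intervalPerm n i m h s⁻¹ * g) x := rfl
      _ = x := by rw [this]; rfl
  have hginv' : ∀ x, g (intervalPerm n i m h s⁻¹ x) = x := by
    intro x
    have : g * intervalPerm n i m h s⁻¹ = 1 := by
      rw [hgdef, intervalPerm.mul_eq, mul_inv_cancel, intervalPerm.one_eq]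
    calc g (intervalPerm n i m h s⁻¹ x) = (g * intervalPerm n i m h s⁻¹) x := rfl
      _ = x := by rw [this]; rfl
  -- comparison of π at two window points
  have hπ' : ∀ (a b : Fin n) (ka kb : Fin m), (ka : ℕ) = a.val - i → (kb : ℕ) = b.val - i →
      (i ≤ a.val ∧ a.val < i + m) → (i ≤ b.val ∧ b.val < i + m) →
      (π a < π b ↔ ka < kb) := by
    intro a b ka kb hka hkb haa hbb
    have ha' : a = ⟨i + ka.val, by have := ka.isLt; omega⟩ := by
      apply Fin.ext; simp only [Fin.val_mk]; omega
    have hb' : b = ⟨i + kb.val, by have := kb.isLt; omega⟩ := by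
      apply Fin.ext; simp only [Fin.val_mk]; omega
    rw [ha', hb']
    exact hπ ka kb
  -- comparison of ρ at two window points
  have hρcmp : ∀ (a b : Fin n) (ka kb : Fin m), (ka : ℕ) = a.val - i → (kb : ℕ) = b.val - i →
      (i ≤ a.val ∧ a.val < i + m) → (i ≤ b.val ∧ b.val < i + m) →
      (ρ a < ρ b ↔ s ka < s kb) := by
    intro a b ka kb hka hkb haa hbb
    rw [hval, hval]
    exact hπ' (g a) (g b) (s ka) (s kb)
      (by rw [intervalPerm.val_of_mem h s haa ka hka]; omega)
      (by rw [intervalPerm.val_of_mem h s hbb kb hkb]; omega)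
      (intervalPerm.mem_of_mem h s haa) (intervalPerm.mem_of_mem h s hbb)
  -- split the inversion set of ρ
  have splitρ := Finset.card_filter_add_card_filter_not
    (s := Finset.univ.filter fun p : Fin n × Fin n => p.1 < p.2 ∧ ρ p.2 < ρ p.1)
    (p := BothIn i m)
  have splitπ := Finset.card_filter_add_card_filter_not
    (s := Finset.univ.filter fun p : Fin n × Fin n => p.1 < p.2 ∧ π p.2 < π p.1)
    (p := BothIn i m)
  -- Claim 1: window part of inversions of ρ counts inversions of s
  have claim1 : (((Finset.univ.filter fun p : Fin n × Fin n => p.1 < p.2 ∧ ρ p.2 < ρ p.1)).filter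
      (BothIn i m)).card = invCount s := by
    rw [invCount]
    apply Finset.card_bij (fun p hp =>
      ((⟨p.1.val - i, by
          have h2 := (Finset.mem_filter.mp hp).2.1; omega⟩ : Fin m),
       (⟨p.2.val - i, by
          have h2 := (Finset.mem_filter.mp hp).2.2; omega⟩ : Fin m)))
    · intro p hp
      have hB := (Finset.mem_filter.mp hp).2
      have hC := (Finset.mem_filter.mp (Finset.mem_filter.mp hp).1).2
      simp only [Finset.mem_filter, Finset.mem_univ, true_and]
      constructor
      · rw [Fin.lt_def]
        simp only [Fin.val_mk]
        have := Fin.lt_def.mp hC.1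
        unfold BothIn at hB
        omega
      · exact (hρcmp p.2 p.1 _ _ (by simp) (by simp) hB.2 hB.1).mp hC.2
    · intro p1 hp1 p2 hp2 heq
      have hB1 := (Finset.mem_filter.mp hp1).2
      have hB2 := (Finset.mem_filter.mp hp2).2
      simp only [Prod.mk.injEq, Fin.mk.injEq] at heq
      have : p1.1 = p2.1 := by apply Fin.ext; unfold BothIn at hB1 hB2; omega
      have h2 : p1.2 = p2.2 := by apply Fin.ext; unfold BothIn at hB1 hB2; omega
      exact Prod.ext this h2
    · intro b hb
      have hbb := (Finset.mem_filter.mp hb).2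
      have hb1 := b.1.isLt
      have hb2 := b.2.isLt
      refine ⟨(⟨i + b.1.val, by omega⟩, ⟨i + b.2.val, by omega⟩), ?_, ?_⟩
      · simp only [Finset.mem_filter, Finset.mem_univ, true_and]
        refine ⟨⟨?_, ?_⟩, ?_, ?_⟩
        · rw [Fin.lt_def]; simp only [Fin.val_mk]
          have := Fin.lt_def.mp hbb.1; omega
        · exact (hρcmp _ _ b.2 b.1 (by simp) (by simp)
            (by simp only [Fin.val_mk]; omega) (by simp only [Fin.val_mk]; omega)).mpr hbb.2
        · simp only [Fin.val_mk]; omega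
        · simp only [Fin.val_mk]; omega
      · refine Prod.ext ?_ ?_ <;> apply Fin.ext <;> simp only [Fin.val_mk] <;> omega
    done
  -- Claim 2: off-window inversions of ρ biject with off-window inversions of π
  have claim2 : (((Finset.univ.filter fun p : Fin n × Fin n => p.1 < p.2 ∧ ρ p.2 < ρ p.1)).filter
      (fun p => ¬ BothIn i m p)).card
      = (((Finset.univ.filter fun p : Fin n × Fin n => p.1 < p.2 ∧ π p.2 < π p.1)).filter
      (fun p => ¬ BothIn i m p)).card := by
    apply Finset.card_nbij' (fun p => (g p.1, g p.2))
      (fun p => (intervalPerm n i m h s⁻¹ p.1, intervalPerm n i m h s⁻¹ p.2))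
    · intro p hp
      have hB := (Finset.mem_filter.mp hp).2
      have hC := (Finset.mem_filter.mp (Finset.mem_filter.mp hp).1).2
      simp only [Finset.mem_coe, Finset.mem_filter, Finset.mem_univ, true_and]
      refine ⟨⟨?_, ?_⟩, ?_⟩
      · exact intervalPerm.lt_of_lt h s hC.1 hB
      · exact hC.2
      · unfold BothIn at hB ⊢
        rw [intervalPerm.mem_iff h s p.1, intervalPerm.mem_iff h s p.2]
        exact hB
    · intro p hp
      have hB := (Finset.mem_filter.mp hp).2
      have hC := (Finset.mem_filter.mp (Finset.mem_filter.mp hp).1).2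
      simp only [Finset.mem_coe, Finset.mem_filter, Finset.mem_univ, true_and]
      refine ⟨⟨?_, ?_⟩, ?_⟩
      · exact intervalPerm.lt_of_lt h s⁻¹ hC.1 hB
      · show ρ _ < ρ _
        rw [hval, hval, hginv', hginv']
        exact hC.2
      · unfold BothIn at hB ⊢
        rw [intervalPerm.mem_iff h s⁻¹ p.1, intervalPerm.mem_iff h s⁻¹ p.2]
        exact hB
    · intro p hp
      exact Prod.ext (hginv p.1) (hginv p.2)
    · intro p hp
      exact Prod.ext (hginv' p.1) (hginv' p.2)
  -- Claim 3: π has no inversions inside the window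
  have claim3 : (((Finset.univ.filter fun p : Fin n × Fin n => p.1 < p.2 ∧ π p.2 < π p.1)).filter
      (BothIn i m)).card = 0 := by
    rw [Finset.card_eq_zero]
    apply Finset.eq_empty_of_forall_notMem
    intro p hp
    have hB := (Finset.mem_filter.mp hp).2
    have hC := (Finset.mem_filter.mp (Finset.mem_filter.mp hp).1).2
    unfold BothIn at hB
    have hlt : π p.1 < π p.2 := by
      rw [hπ' p.1 p.2 ⟨p.1.val - i, by omega⟩ ⟨p.2.val - i, by omega⟩ (by simp) (by simp)
        hB.1 hB.2]
      rw [Fin.lt_def]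
      simp only [Fin.val_mk]
      have := Fin.lt_def.mp hC.1
      omega
    exact absurd hC.2 (not_lt.mpr hlt.le)
  -- assemble
  show (Finset.univ.filter fun p : Fin n × Fin n => p.1 < p.2 ∧ ρ p.2 < ρ p.1).card
    = (Finset.univ.filter fun p : Fin n × Fin n => p.1 < p.2 ∧ π p.2 < π p.1).card + invCount s
  omega

/-- The permutation of `Fin (n+1)` that maps `n ↦ v` and shifts `[v, n)` up by one. -/
def dPerm {n : ℕ} (v : Fin (n+1)) : Equiv.Perm (Fin (n+1)) where
  toFun x := ⟨if x.val < v.val then x.val else if x.val < n then x.val + 1 else v.val, by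
    have := v.isLt; have := x.isLt; split_ifs <;> omega⟩
  invFun y := ⟨if y.val < v.val then y.val else if y.val = v.val then n else y.val - 1, by
    have := v.isLt; have := y.isLt; split_ifs <;> omega⟩
  left_inv x := by
    have hv := v.isLt; have hx := x.isLt
    apply Fin.ext
    simp only [Fin.val_mk]
    split_ifs <;> omega
  right_inv y := by
    have hv := v.isLt; have hy := y.isLt
    apply Fin.ext
    simp only [Fin.val_mk]
    split_ifs <;> omega

lemma dPerm_val {n : ℕ} (v : Fin (n+1)) (x : Fin (n+1)) :
    (dPerm v x).val = if x.val < v.val then x.val else if x.val < n then x.val + 1 else v.val :=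
  rfl

/-- Extend a permutation of `Fin n` to `Fin (n+1)` fixing the last element. -/
def extPerm {n : ℕ} (e : Equiv.Perm (Fin n)) : Equiv.Perm (Fin (n+1)) where
  toFun x := if hx : x.val < n then
      ⟨(e ⟨x.val, hx⟩).val, by have := (e ⟨x.val, hx⟩).isLt; omega⟩ else x
  invFun y := if hy : y.val < n then
      ⟨(e⁻¹ ⟨y.val, hy⟩).val, by have := (e⁻¹ ⟨y.val, hy⟩).isLt; omega⟩ else y
  left_inv x := by
    by_cases hx : x.val < n
    · simp only [dif_pos hx]
      split_ifs with h2
      · apply Fin.ext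
        simp only [Fin.val_mk, Fin.eta, Equiv.Perm.inv_apply_self]
      · exact absurd (Fin.isLt (e ⟨x.val, hx⟩)) h2
    · simp only [dif_neg hx]
  right_inv y := by
    by_cases hy : y.val < n
    · simp only [dif_pos hy]
      split_ifs with h2
      · apply Fin.ext
        simp only [Fin.val_mk, Fin.eta, Equiv.Perm.apply_inv_self]
      · exact absurd (Fin.isLt (e⁻¹ ⟨y.val, hy⟩)) h2
    · simp only [dif_neg hy]

lemma extPerm_val_lt {n : ℕ} (e : Equiv.Perm (Fin n)) {x : Fin (n+1)} (hx : x.val < n) :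
    (extPerm e x).val = (e ⟨x.val, hx⟩).val := by
  simp only [extPerm, Equiv.coe_fn_mk, dif_pos hx, Fin.val_mk]

lemma extPerm_last {n : ℕ} (e : Equiv.Perm (Fin n)) {x : Fin (n+1)} (hx : ¬ x.val < n) :
    extPerm e x = x := by
  simp only [extPerm, Equiv.coe_fn_mk, dif_neg hx]

lemma Phi_last {n : ℕ} (v : Fin (n+1)) (e : Equiv.Perm (Fin n)) :
    (dPerm v * extPerm e) ⟨n, Nat.lt_succ_self n⟩ = v := by
  rw [Equiv.Perm.mul_apply, extPerm_last e (by simp)]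
  apply Fin.ext
  rw [dPerm_val]
  simp only [Fin.val_mk]
  have := v.isLt
  split_ifs <;> omega

lemma Phi_lt_val {n : ℕ} (v : Fin (n+1)) (e : Equiv.Perm (Fin n)) (x : Fin (n+1))
    (hx : x.val < n) :
    ((dPerm v * extPerm e) x).val
      = if (e ⟨x.val, hx⟩).val < v.val then (e ⟨x.val, hx⟩).val
        else (e ⟨x.val, hx⟩).val + 1 := by
  rw [Equiv.Perm.mul_apply]
  have h1 : extPerm e x = ⟨(e ⟨x.val, hx⟩).val, by have := (e ⟨x.val, hx⟩).isLt; omega⟩ := by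
    apply Fin.ext; rw [extPerm_val_lt e hx]
  rw [h1, dPerm_val]
  simp only [Fin.val_mk]
  have := (e ⟨x.val, hx⟩).isLt
  have hvv := v.isLt
  split_ifs <;> omega

lemma Phi_inj {n : ℕ} :
    Function.Injective (fun ve : Fin (n+1) × Equiv.Perm (Fin n) =>
      dPerm ve.1 * extPerm ve.2) := by
  rintro ⟨v, e⟩ ⟨v', e'⟩ hEq
  simp only at hEq
  have hv : v = v' := by
    rw [← Phi_last v e, ← Phi_last v' e', hEq]
  subst hv
  have he : e = e' := by
    apply Equiv.ext
    intro a
    have ha : (a.val : ℕ) < n := a.isLt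
    have h1 := Phi_lt_val v e ⟨a.val, by omega⟩ (by simpa using ha)
    have h2 := Phi_lt_val v e' ⟨a.val, by omega⟩ (by simpa using ha)
    rw [hEq] at h1
    have heta : (⟨(⟨a.val, by omega⟩ : Fin (n+1)).val, by simpa using ha⟩ : Fin n) = a := by
      apply Fin.ext; simp only [Fin.val_mk]
    rw [heta] at h1 h2
    have hvv := v.isLt
    have h3 : (e a).val = (e' a).val := by
      have l1 := (e a).isLt
      have l2 := (e' a).isLt
      rw [h2] at h1
      split_ifs at h1 <;> omega
    exact Fin.ext h3
  rw [he]

lemma cmp_last {n : ℕ} (v : Fin (n+1)) (e : Equiv.Perm (Fin n)) (x : Fin (n+1))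
    (hx : x.val < n) :
    (v < (dPerm v * extPerm e) x ↔ v.val ≤ (e ⟨x.val, hx⟩).val) := by
  rw [Fin.lt_def, Phi_lt_val v e x hx]
  split_ifs <;> omega

lemma cmp_lt {n : ℕ} (v : Fin (n+1)) (e : Equiv.Perm (Fin n)) (x y : Fin (n+1))
    (hx : x.val < n) (hy : y.val < n) :
    ((dPerm v * extPerm e) x < (dPerm v * extPerm e) y
      ↔ e ⟨x.val, hx⟩ < e ⟨y.val, hy⟩) := by
  rw [Fin.lt_def, Fin.lt_def, Phi_lt_val v e x hx, Phi_lt_val v e y hy]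
  split_ifs <;> omega

lemma card_filter_le {n : ℕ} (v : ℕ) :
    (Finset.univ.filter fun y : Fin n => v ≤ y.val).card = n - v := by
  have : (Finset.univ.filter fun y : Fin n => v ≤ y.val).card = (Finset.Ico v n).card := by
    apply Finset.card_bij (fun y _ => y.val)
    · intro a ha
      have := a.isLt
      have hv := (Finset.mem_filter.mp ha).2
      simp only [Finset.mem_Ico]
      omega
    · intro a _ b _ hab
      exact Fin.ext hab
    · intro b hb
      have hb' := Finset.mem_Ico.mp hb
      refine ⟨⟨b, hb'.2⟩, ?_, rfl⟩
      simp only [Finset.mem_filter, Finset.mem_univ, true_and, Fin.val_mk]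
      exact hb'.1
  rw [this, Nat.card_Ico]

lemma invCount_Phi {n : ℕ} (v : Fin (n+1)) (e : Equiv.Perm (Fin n)) :
    invCount (dPerm v * extPerm e) = (n - v.val) + invCount e := by
  set ρ := dPerm v * extPerm e with hρ
  have split := Finset.card_filter_add_card_filter_not
    (s := Finset.univ.filter fun p : Fin (n+1) × Fin (n+1) => p.1 < p.2 ∧ ρ p.2 < ρ p.1)
    (p := fun p => p.2.val = n)
  have partA : ((Finset.univ.filter fun p : Fin (n+1) × Fin (n+1) =>
      p.1 < p.2 ∧ ρ p.2 < ρ p.1).filter fun p => p.2.val = n).card = n - v.val := by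
    rw [← card_filter_le (n := n) v.val]
    have step : ((Finset.univ.filter fun p : Fin (n+1) × Fin (n+1) =>
        p.1 < p.2 ∧ ρ p.2 < ρ p.1).filter fun p => p.2.val = n).card
        = (Finset.univ.filter fun a : Fin n => v.val ≤ (e a).val).card := by
      apply Finset.card_bij (fun p hp => (⟨p.1.val, by
        have h1 := (Finset.mem_filter.mp hp).2
        have h2 := Fin.lt_def.mp ((Finset.mem_filter.mp (Finset.mem_filter.mp hp).1).2).1
        omega⟩ : Fin n))
      · intro p hp
        have hlastv := (Finset.mem_filter.mp hp).2
        have hC := (Finset.mem_filter.mp (Finset.mem_filter.mp hp).1).2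
        have hp1 : p.1.val < n := by have := Fin.lt_def.mp hC.1; omega
        simp only [Finset.mem_filter, Finset.mem_univ, true_and]
        have hplast : p.2 = ⟨n, Nat.lt_succ_self n⟩ := Fin.ext hlastv
        have hρ2 : ρ p.2 = v := by rw [hplast, hρ, Phi_last]
        have hvlt : v < ρ p.1 := hρ2 ▸ hC.2
        exact (cmp_last v e p.1 hp1).mp hvlt
      · intro a ha b hb hab
        have h1 : a.1.val = b.1.val := by
          have := congrArg Fin.val hab
          simpa using this
        have h2 : a.2.val = n := (Finset.mem_filter.mp ha).2
        have h3 : b.2.val = n := (Finset.mem_filter.mp hb).2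
        exact Prod.ext (Fin.ext h1) (Fin.ext (by omega))
      · intro b hb
        have hbv := (Finset.mem_filter.mp hb).2
        have hbn := b.isLt
        refine ⟨(⟨b.val, by omega⟩, ⟨n, Nat.lt_succ_self n⟩), ?_, ?_⟩
        · simp only [Finset.mem_filter, Finset.mem_univ, true_and]
          refine ⟨⟨?_, ?_⟩, by simp only [Fin.val_mk]⟩
          · rw [Fin.lt_def]; simp only [Fin.val_mk]; omega
          · have hρ2 : ρ (⟨n, Nat.lt_succ_self n⟩ : Fin (n+1)) = v := Phi_last v e
            rw [hρ2]
            rw [hρ]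
            rw [cmp_last v e ⟨b.val, by omega⟩ (by simp only [Fin.val_mk]; omega)]
            have heta : (⟨(⟨b.val, by omega⟩ : Fin (n+1)).val, by simp only [Fin.val_mk]; omega⟩ : Fin n) = b := by
              apply Fin.ext; simp only [Fin.val_mk]
            rw [heta]
            exact hbv
        · apply Fin.ext; simp only [Fin.val_mk]
    rw [step]
    apply Finset.card_nbij' (fun a => e a) (fun y => e⁻¹ y)
    · intro a ha
      simp only [Finset.mem_coe, Finset.mem_filter, Finset.mem_univ, true_and] at ha ⊢
      exact ha
    · intro a ha
      simp only [Finset.mem_coe, Finset.mem_filter, Finset.mem_univ, true_and] at ha ⊢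
      rw [Equiv.Perm.apply_inv_self]
      exact ha
    · intro a _; exact Equiv.Perm.inv_apply_self e a
    · intro a _; exact Equiv.Perm.apply_inv_self e a
  have partB : ((Finset.univ.filter fun p : Fin (n+1) × Fin (n+1) =>
      p.1 < p.2 ∧ ρ p.2 < ρ p.1).filter fun p => ¬ p.2.val = n).card = invCount e := by
    rw [invCount]
    apply Finset.card_bij (fun p hp =>
      ((⟨p.1.val, by
        have h1 := (Finset.mem_filter.mp hp).2
        have h2 := Fin.lt_def.mp ((Finset.mem_filter.mp (Finset.mem_filter.mp hp).1).2).1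
        have := p.2.isLt
        omega⟩ : Fin n),
       (⟨p.2.val, by
        have h1 := (Finset.mem_filter.mp hp).2
        have := p.2.isLt
        omega⟩ : Fin n)))
    · intro p hp
      have h1 := (Finset.mem_filter.mp hp).2
      have hC := (Finset.mem_filter.mp (Finset.mem_filter.mp hp).1).2
      have hp2 : p.2.val < n := by have := p.2.isLt; omega
      have hp1 : p.1.val < n := by have := Fin.lt_def.mp hC.1; omega
      simp only [Finset.mem_filter, Finset.mem_univ, true_and]
      constructor
      · rw [Fin.lt_def]; simp only [Fin.val_mk]; exact Fin.lt_def.mp hC.1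
      · exact (cmp_lt v e p.2 p.1 hp2 hp1).mp hC.2
    · intro a ha b hb hab
      simp only [Prod.mk.injEq, Fin.mk.injEq] at hab
      exact Prod.ext (Fin.ext hab.1) (Fin.ext hab.2)
    · intro r hr
      have hrr := (Finset.mem_filter.mp hr).2
      have h1 := r.1.isLt
      have h2 := r.2.isLt
      refine ⟨(⟨r.1.val, by omega⟩, ⟨r.2.val, by omega⟩), ?_, ?_⟩
      · simp only [Finset.mem_filter, Finset.mem_univ, true_and]
        refine ⟨⟨?_, ?_⟩, ?_⟩
        · rw [Fin.lt_def]; simp only [Fin.val_mk]; exact Fin.lt_def.mp hrr.1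
        · rw [hρ, cmp_lt v e _ _ (show (⟨r.2.val, by omega⟩ : Fin (n+1)).val < n by
              simp only [Fin.val_mk]; omega)
            (show (⟨r.1.val, by omega⟩ : Fin (n+1)).val < n by simp only [Fin.val_mk]; omega)]
          have heta2 : (⟨(⟨r.2.val, by omega⟩ : Fin (n+1)).val, by simp only [Fin.val_mk]; omega⟩ : Fin n) = r.2 := by
            apply Fin.ext; simp only [Fin.val_mk]
          have heta1 : (⟨(⟨r.1.val, by omega⟩ : Fin (n+1)).val, by simp only [Fin.val_mk]; omega⟩ : Fin n) = r.1 := by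
            apply Fin.ext; simp only [Fin.val_mk]
          rw [heta1, heta2]
          exact hrr.2
        · exact Nat.ne_of_lt h2
      · rfl
  show (Finset.univ.filter fun p : Fin (n+1) × Fin (n+1) =>
    p.1 < p.2 ∧ ρ p.2 < ρ p.1).card = (n - v.val) + invCount e
  omega

lemma sum_q_pow_invCount (q : ℝ) : ∀ n, ∑ π : Equiv.Perm (Fin n), q ^ invCount π = invPoly n q := by
  intro n
  induction n with
  | zero =>
    have h0 : ∀ π : Equiv.Perm (Fin 0), q ^ invCount π = 1 := by
      intro π
      have : invCount π = 0 := by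
        rw [invCount]
        apply Finset.card_eq_zero.mpr
        apply Finset.eq_empty_of_forall_notMem
        intro p _
        exact p.1.elim0
      rw [this, pow_zero]
    rw [Finset.sum_congr rfl fun π _ => h0 π, Finset.sum_const, Finset.card_univ]
    simp [invPoly, Fintype.card_perm]
  | succ n ih =>
    have hbij : Function.Bijective (fun ve : Fin (n+1) × Equiv.Perm (Fin n) =>
        dPerm ve.1 * extPerm ve.2) := by
      rw [Fintype.bijective_iff_injective_and_card]
      refine ⟨Phi_inj, ?_⟩
      simp [Fintype.card_perm, Fintype.card_prod, Fintype.card_fin, Nat.factorial_succ]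
    have hsum := Fintype.sum_bijective _ hbij
      (fun ve : Fin (n+1) × Equiv.Perm (Fin n) => q ^ invCount (dPerm ve.1 * extPerm ve.2))
      (fun π => q ^ invCount π) (fun ve => rfl)
    rw [← hsum]
    rw [Fintype.sum_prod_type]
    have hinner : ∀ v : Fin (n+1), ∑ e : Equiv.Perm (Fin n),
        q ^ invCount (dPerm v * extPerm e) = q ^ (n - v.val) * invPoly n q := by
      intro v
      rw [← ih, Finset.mul_sum]
      apply Finset.sum_congr rfl
      intro e _
      rw [invCount_Phi, pow_add]
    rw [Finset.sum_congr rfl fun v _ => hinner v, ← Finset.sum_mul]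
    have hrefl : ∑ v : Fin (n+1), q ^ (n - v.val) = ∑ j ∈ Finset.range (n+1), q ^ j := by
      rw [Fin.sum_univ_eq_sum_range (fun j => q ^ (n - j)) (n+1)]
      have := Finset.sum_range_reflect (fun j => q ^ j) (n+1)
      simpa using this
    rw [hrefl, show invPoly (n+1) q = invPoly n q * ∑ i ∈ Finset.range (n+1), q ^ i from by
      rw [invPoly, invPoly, Finset.prod_range_succ]]
    ring

lemma strictMono_le_self {m : ℕ} (g : Equiv.Perm (Fin m)) (hg : StrictMono ⇑g) :
    ∀ (r : ℕ) (hk : r < m), r ≤ (g ⟨r, hk⟩).val := by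
  intro r
  induction r with
  | zero => intro hk; exact Nat.zero_le _
  | succ r ihr =>
    intro hk
    have h2 := ihr (by omega)
    have h3 : g ⟨r, by omega⟩ < g ⟨r+1, hk⟩ := hg (by rw [Fin.lt_def]; simp only [Fin.val_mk]; omega)
    have := Fin.lt_def.mp h3
    omega

lemma strictMono_perm_eq_one {m : ℕ} (g : Equiv.Perm (Fin m)) (hg : StrictMono ⇑g) : g = 1 := by
  have hginv : StrictMono ⇑g⁻¹ := by
    intro a b hab
    rcases lt_trichotomy (g⁻¹ a) (g⁻¹ b) with hlt | heq | hgt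
    · exact hlt
    · exact absurd (by rw [← Equiv.Perm.apply_inv_self g a, ← Equiv.Perm.apply_inv_self g b, heq])
        (ne_of_lt hab)
    · have := hg hgt
      rw [Equiv.Perm.apply_inv_self, Equiv.Perm.apply_inv_self] at this
      exact absurd hab (not_lt.mpr this.le)
  apply Equiv.ext
  intro k
  have h1 : k.val ≤ (g k).val := by
    have := strictMono_le_self g hg k.val k.isLt
    simpa [Fin.eta] using this
  have h2 : (g k).val ≤ k.val := by
    have := strictMono_le_self g⁻¹ hginv (g k).val (g k).isLt
    simp only [Fin.eta] at this
    rw [Equiv.Perm.inv_apply_self] at this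
    exact this
  apply Fin.ext
  simp only [Equiv.Perm.one_apply]
  omega

lemma window_inj {n i m : ℕ} (h : i + m ≤ n) (π : Equiv.Perm (Fin n)) :
    Function.Injective (fun k : Fin m => π ⟨i + k.val, by have := k.isLt; omega⟩) := by
  intro a b hab
  simp only at hab
  have := π.injective hab
  have hval := congrArg Fin.val this
  simp only [Fin.val_mk] at hval
  apply Fin.ext
  omega

lemma window_card {n i m : ℕ} (h : i + m ≤ n) (π : Equiv.Perm (Fin n)) :
    (Finset.univ.image fun k : Fin m => π ⟨i + k.val, by have := k.isLt; omega⟩).card = m := by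
  rw [Finset.card_image_of_injective _ (window_inj h π), Finset.card_univ, Fintype.card_fin]

/-- The pattern (reduction) of `π` on the window `[i, i+m)`. -/
noncomputable def patt {n : ℕ} (i m : ℕ) (h : i + m ≤ n) (π : Equiv.Perm (Fin n)) :
    Equiv.Perm (Fin m) :=
  Equiv.ofBijective (fun k =>
    ((Finset.univ.image fun k : Fin m => π ⟨i + k.val, by have := k.isLt; omega⟩).orderIsoOfFin
      (window_card h π)).symm
      ⟨π ⟨i + k.val, by have := k.isLt; omega⟩,
        Finset.mem_image_of_mem _ (Finset.mem_univ k)⟩)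
    (by
      rw [Fintype.bijective_iff_injective_and_card]
      refine ⟨?_, rfl⟩
      intro a b hab
      apply window_inj h π
      have := (((Finset.univ.image fun k : Fin m =>
        π ⟨i + k.val, by have := k.isLt; omega⟩).orderIsoOfFin
        (window_card h π)).symm.injective hab)
      exact congrArg Subtype.val this)

lemma patt_lt_iff {n i m : ℕ} (h : i + m ≤ n) (π : Equiv.Perm (Fin n)) (k l : Fin m) :
    patt i m h π k < patt i m h π l
      ↔ π ⟨i + k.val, by have := k.isLt; omega⟩ < π ⟨i + l.val, by have := l.isLt; omega⟩ := by
  show ((Finset.univ.image _).orderIsoOfFin (window_card h π)).symm _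
    < ((Finset.univ.image _).orderIsoOfFin (window_card h π)).symm _ ↔ _
  rw [OrderIso.lt_iff_lt]
  exact Iff.rfl

lemma occursConsec_iff_patt {n i m : ℕ} (h : i + m ≤ n) (σ : Equiv.Perm (Fin m))
    (π : Equiv.Perm (Fin n)) :
    OccursConsec σ π i ↔ patt i m h π = σ := by
  constructor
  · rintro ⟨h', hh⟩
    have key : ∀ k l : Fin m, patt i m h π k < patt i m h π l ↔ σ k < σ l :=
      fun k l => (patt_lt_iff h π k l).trans (hh k l)
    have hmono : StrictMono ⇑(patt i m h π * σ⁻¹) := by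
      intro a b hab
      rw [Equiv.Perm.mul_apply, Equiv.Perm.mul_apply]
      exact (key (σ⁻¹ a) (σ⁻¹ b)).mpr (by
        rw [Equiv.Perm.apply_inv_self, Equiv.Perm.apply_inv_self]; exact hab)
    have := strictMono_perm_eq_one _ hmono
    rwa [mul_inv_eq_one] at this
  · intro hp
    exact ⟨h, fun k l => by rw [← hp]; exact (patt_lt_iff h π k l).symm⟩

lemma occurs_mul_interval {n i m : ℕ} (h : i + m ≤ n) (σ τ : Equiv.Perm (Fin m))
    (π : Equiv.Perm (Fin n)) (hσ : OccursConsec σ π i) :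
    OccursConsec (σ * τ) (π * intervalPerm n i m h τ) i := by
  obtain ⟨h', hh⟩ := hσ
  refine ⟨h, fun k l => ?_⟩
  have key : ∀ k : Fin m, (π * intervalPerm n i m h τ) ⟨i + k.val, by have := k.isLt; omega⟩
      = π ⟨i + (τ k).val, by have := (τ k).isLt; omega⟩ := by
    intro k
    have hk := k.isLt
    rw [Equiv.Perm.mul_apply]
    congr 1
    apply Fin.ext
    rw [intervalPerm.val_of_mem h τ
      (by simp only [Fin.val_mk]; constructor <;> omega) k (by simp only [Fin.val_mk]; omega)]
  rw [key k, key l]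
  exact hh (τ k) (τ l)

lemma occurs_untouched {n i m i' m' : ℕ} (h' : i' + m' ≤ n) (τ : Equiv.Perm (Fin m'))
    (σ : Equiv.Perm (Fin m)) (π : Equiv.Perm (Fin n)) (hd : i + m ≤ i' ∨ i' + m' ≤ i)
    (hσ : OccursConsec σ π i) : OccursConsec σ (π * intervalPerm n i' m' h' τ) i := by
  obtain ⟨h'', hh⟩ := hσ
  refine ⟨h'', fun k l => ?_⟩
  have key : ∀ k : Fin m, (π * intervalPerm n i' m' h' τ) ⟨i + k.val, by have := k.isLt; omega⟩
      = π ⟨i + k.val, by have := k.isLt; omega⟩ := by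
    intro k
    have hk := k.isLt
    rw [Equiv.Perm.mul_apply, intervalPerm.apply_of_not_mem h' τ
      (by simp only [Fin.val_mk]; omega)]
  rw [key k, key l]
  exact hh k l

lemma sum_one_block (q : ℝ) {n i m : ℕ} (h : i + m ≤ n) (σ : Equiv.Perm (Fin m)) :
    ∑ π ∈ Finset.univ.filter (fun π : Equiv.Perm (Fin n) => OccursConsec σ π i), q ^ invCount π
      = q ^ invCount σ *
        ∑ π ∈ Finset.univ.filter (fun π : Equiv.Perm (Fin n) =>
          OccursConsec (1 : Equiv.Perm (Fin m)) π i), q ^ invCount π := by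
  rw [Finset.mul_sum]
  apply Finset.sum_nbij' (fun π => π * intervalPerm n i m h σ⁻¹)
    (fun ρ => ρ * intervalPerm n i m h σ)
  · intro π hπ
    have hσc := (Finset.mem_filter.mp hπ).2
    simp only [Finset.mem_filter, Finset.mem_univ, true_and]
    have := occurs_mul_interval h σ σ⁻¹ π hσc
    rwa [mul_inv_cancel] at this
  · intro ρ hρ
    have hc := (Finset.mem_filter.mp hρ).2
    simp only [Finset.mem_filter, Finset.mem_univ, true_and]
    have := occurs_mul_interval h 1 σ ρ hc
    rwa [one_mul] at this
  · intro π _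
    rw [mul_assoc, intervalPerm.mul_eq, inv_mul_cancel, intervalPerm.one_eq, mul_one]
  · intro ρ _
    rw [mul_assoc, intervalPerm.mul_eq, mul_inv_cancel, intervalPerm.one_eq, mul_one]
  · intro π hπ
    have hσc := (Finset.mem_filter.mp hπ).2
    have hone : OccursConsec (1 : Equiv.Perm (Fin m)) (π * intervalPerm n i m h σ⁻¹) i := by
      have := occurs_mul_interval h σ σ⁻¹ π hσc
      rwa [mul_inv_cancel] at this
    obtain ⟨_, hh⟩ := hone
    have hinv := invCount_mul_interval h (π * intervalPerm n i m h σ⁻¹) σ hh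
    rw [mul_assoc, intervalPerm.mul_eq, inv_mul_cancel, intervalPerm.one_eq, mul_one] at hinv
    rw [hinv, pow_add]
    ring

lemma sum_two_block (q : ℝ) {n m m' i i' : ℕ} (h1 : i + m ≤ i') (h2 : i' + m' ≤ n)
    (σ : Equiv.Perm (Fin m)) (σ' : Equiv.Perm (Fin m')) :
    ∑ π ∈ Finset.univ.filter (fun π : Equiv.Perm (Fin n) =>
        OccursConsec σ π i ∧ OccursConsec σ' π i'), q ^ invCount π
      = q ^ (invCount σ + invCount σ') *
        ∑ π ∈ Finset.univ.filter (fun π : Equiv.Perm (Fin n) =>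
          OccursConsec (1 : Equiv.Perm (Fin m)) π i ∧
          OccursConsec (1 : Equiv.Perm (Fin m')) π i'), q ^ invCount π := by
  have hA : i + m ≤ n := by omega
  have cancelBA : ∀ π : Equiv.Perm (Fin n),
      π * intervalPerm n i' m' h2 σ'⁻¹ * intervalPerm n i m hA σ⁻¹
        * intervalPerm n i m hA σ * intervalPerm n i' m' h2 σ' = π := by
    intro π
    rw [mul_assoc (π * intervalPerm n i' m' h2 σ'⁻¹), intervalPerm.mul_eq,
      inv_mul_cancel, intervalPerm.one_eq, mul_one, mul_assoc, intervalPerm.mul_eq,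
      inv_mul_cancel, intervalPerm.one_eq, mul_one]
  have cancelAB : ∀ ρ : Equiv.Perm (Fin n),
      ρ * intervalPerm n i m hA σ * intervalPerm n i' m' h2 σ'
        * intervalPerm n i' m' h2 σ'⁻¹ * intervalPerm n i m hA σ⁻¹ = ρ := by
    intro ρ
    rw [mul_assoc (ρ * intervalPerm n i m hA σ), intervalPerm.mul_eq,
      mul_inv_cancel, intervalPerm.one_eq, mul_one, mul_assoc, intervalPerm.mul_eq,
      mul_inv_cancel, intervalPerm.one_eq, mul_one]
  have himg : ∀ π : Equiv.Perm (Fin n), OccursConsec σ π i → OccursConsec σ' π i' →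
      OccursConsec (1 : Equiv.Perm (Fin m))
        (π * intervalPerm n i' m' h2 σ'⁻¹ * intervalPerm n i m hA σ⁻¹) i ∧
      OccursConsec (1 : Equiv.Perm (Fin m'))
        (π * intervalPerm n i' m' h2 σ'⁻¹ * intervalPerm n i m hA σ⁻¹) i' := by
    intro π hc1 hc2
    constructor
    · have s1 : OccursConsec σ (π * intervalPerm n i' m' h2 σ'⁻¹) i :=
        occurs_untouched h2 σ'⁻¹ σ π (Or.inl h1) hc1
      have s2 := occurs_mul_interval hA σ σ⁻¹ _ s1
      rwa [mul_inv_cancel] at s2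
    · have s1 := occurs_mul_interval h2 σ' σ'⁻¹ π hc2
      rw [mul_inv_cancel] at s1
      exact occurs_untouched hA σ⁻¹ 1 _ (Or.inr h1) s1
  rw [Finset.mul_sum]
  apply Finset.sum_nbij'
    (fun π => π * intervalPerm n i' m' h2 σ'⁻¹ * intervalPerm n i m hA σ⁻¹)
    (fun ρ => ρ * intervalPerm n i m hA σ * intervalPerm n i' m' h2 σ')
  · intro π hπ
    have hc := (Finset.mem_filter.mp hπ).2
    simp only [Finset.mem_filter, Finset.mem_univ, true_and]
    exact himg π hc.1 hc.2
  · intro ρ hρ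
    have hc := (Finset.mem_filter.mp hρ).2
    simp only [Finset.mem_filter, Finset.mem_univ, true_and]
    constructor
    · have s2 : OccursConsec σ (ρ * intervalPerm n i m hA σ) i := by
        have h3 := occurs_mul_interval hA 1 σ ρ hc.1
        rwa [one_mul] at h3
      exact occurs_untouched h2 σ' σ _ (Or.inl h1) s2
    · have s1 : OccursConsec (1 : Equiv.Perm (Fin m')) (ρ * intervalPerm n i m hA σ) i' :=
        occurs_untouched hA σ 1 ρ (Or.inr h1) hc.2
      have s2 := occurs_mul_interval h2 1 σ' _ s1
      rwa [one_mul] at s2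
  · intro π _
    exact cancelBA π
  · intro ρ _
    exact cancelAB ρ
  · intro π hπ
    have hc := (Finset.mem_filter.mp hπ).2
    obtain ⟨hoA, hoB⟩ := himg π hc.1 hc.2
    set ρ := π * intervalPerm n i' m' h2 σ'⁻¹ * intervalPerm n i m hA σ⁻¹ with hρdef
    obtain ⟨_, hhA⟩ := hoA
    have stepA : invCount (ρ * intervalPerm n i m hA σ) = invCount ρ + invCount σ :=
      invCount_mul_interval hA ρ σ hhA
    have hoB' : OccursConsec (1 : Equiv.Perm (Fin m')) (ρ * intervalPerm n i m hA σ) i' :=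
      occurs_untouched hA σ 1 ρ (Or.inr h1) hoB
    obtain ⟨_, hhB⟩ := hoB'
    have stepB : invCount (ρ * intervalPerm n i m hA σ * intervalPerm n i' m' h2 σ')
        = invCount (ρ * intervalPerm n i m hA σ) + invCount σ' :=
      invCount_mul_interval h2 _ σ' hhB
    have hback : ρ * intervalPerm n i m hA σ * intervalPerm n i' m' h2 σ' = π := by
      rw [hρdef]; exact cancelBA π
    rw [hback] at stepB
    rw [stepB, stepA, pow_add, pow_add]
    ring

lemma invPoly_pos {q : ℝ} (hq : 0 < q) (n : ℕ) : 0 < invPoly n q := by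
  apply Finset.prod_pos
  intro j _
  apply Finset.sum_pos
  · intro k _
    exact pow_pos hq k
  · exact Finset.nonempty_range_add_one

lemma fib_one_block (q : ℝ) {n i m : ℕ} (h : i + m ≤ n) :
    ∑ σ0 : Equiv.Perm (Fin m), ∑ π ∈ Finset.univ.filter
      (fun π : Equiv.Perm (Fin n) => OccursConsec σ0 π i), q ^ invCount π = invPoly n q := by
  have hfe : ∀ σ0 : Equiv.Perm (Fin m), Finset.univ.filter
      (fun π : Equiv.Perm (Fin n) => OccursConsec σ0 π i)
      = Finset.univ.filter (fun π : Equiv.Perm (Fin n) => patt i m h π = σ0) := by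
    intro σ0
    apply Finset.filter_congr
    intro π _
    exact occursConsec_iff_patt h σ0 π
  rw [Finset.sum_congr rfl fun σ0 _ => by rw [hfe σ0]]
  rw [Finset.sum_fiberwise Finset.univ (patt i m h) (fun π => q ^ invCount π)]
  exact sum_q_pow_invCount q n

lemma fib_two_block (q : ℝ) {n m m' i i' : ℕ} (h1 : i + m ≤ i') (h2 : i' + m' ≤ n) :
    ∑ σ0 : Equiv.Perm (Fin m), ∑ σ0' : Equiv.Perm (Fin m'),
      ∑ π ∈ Finset.univ.filter (fun π : Equiv.Perm (Fin n) =>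
        OccursConsec σ0 π i ∧ OccursConsec σ0' π i'), q ^ invCount π = invPoly n q := by
  have hA : i + m ≤ n := by omega
  have hfe : ∀ (σ0 : Equiv.Perm (Fin m)) (σ0' : Equiv.Perm (Fin m')), Finset.univ.filter
      (fun π : Equiv.Perm (Fin n) => OccursConsec σ0 π i ∧ OccursConsec σ0' π i')
      = (Finset.univ.filter (fun π : Equiv.Perm (Fin n) => OccursConsec σ0 π i)).filter
          (fun π => patt i' m' h2 π = σ0') := by
    intro σ0 σ0'
    rw [Finset.filter_filter]
    apply Finset.filter_congr
    intro π _
    exact and_congr Iff.rfl (occursConsec_iff_patt h2 σ0' π)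
  have hstep : ∀ σ0 : Equiv.Perm (Fin m),
      ∑ σ0' : Equiv.Perm (Fin m'), ∑ π ∈ Finset.univ.filter
        (fun π : Equiv.Perm (Fin n) => OccursConsec σ0 π i ∧ OccursConsec σ0' π i'),
        q ^ invCount π
      = ∑ π ∈ Finset.univ.filter (fun π : Equiv.Perm (Fin n) => OccursConsec σ0 π i),
          q ^ invCount π := by
    intro σ0
    rw [Finset.sum_congr rfl fun σ0' _ => by rw [hfe σ0 σ0']]
    exact Finset.sum_fiberwise _ (patt i' m' h2) (fun π => q ^ invCount π)
  rw [Finset.sum_congr rfl fun σ0 _ => hstep σ0]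
  exact fib_one_block q hA


/-- Lemma: Mallows(q) permutations are weakly dissociated: the reductions of two disjoint
blocks of consecutive positions are independent. -/
theorem stmt14 (q : ℝ) (hq : 0 < q) (n m m' i i' : ℕ)
    (h1 : i + m ≤ i') (h2 : i' + m' ≤ n)
    (σ : Equiv.Perm (Fin m)) (σ' : Equiv.Perm (Fin m')) :
    mallowsProb q {πn : Equiv.Perm (Fin n) | OccursConsec σ πn i ∧ OccursConsec σ' πn i'}
      = mallowsProb q {πn : Equiv.Perm (Fin n) | OccursConsec σ πn i}
        * mallowsProb q {πn : Equiv.Perm (Fin n) | OccursConsec σ' πn i'} := by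
  have hA : i + m ≤ n := by omega
  set KA := ∑ π ∈ Finset.univ.filter (fun π : Equiv.Perm (Fin n) =>
    OccursConsec (1 : Equiv.Perm (Fin m)) π i), q ^ invCount π with hKA
  set KB := ∑ π ∈ Finset.univ.filter (fun π : Equiv.Perm (Fin n) =>
    OccursConsec (1 : Equiv.Perm (Fin m')) π i'), q ^ invCount π with hKB
  set K := ∑ π ∈ Finset.univ.filter (fun π : Equiv.Perm (Fin n) =>
    OccursConsec (1 : Equiv.Perm (Fin m)) π i ∧
    OccursConsec (1 : Equiv.Perm (Fin m')) π i'), q ^ invCount π with hK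
  have hTpos := invPoly_pos hq m
  have hT'pos := invPoly_pos hq m'
  have hIpos := invPoly_pos hq n
  -- marginal relations
  have relA : invPoly m q * KA = invPoly n q := by
    rw [← fib_one_block q hA, ← sum_q_pow_invCount q m, Finset.sum_mul]
    apply Finset.sum_congr rfl
    intro σ0 _
    exact (sum_one_block q hA σ0).symm
  have relB : invPoly m' q * KB = invPoly n q := by
    rw [← fib_one_block q h2, ← sum_q_pow_invCount q m', Finset.sum_mul]
    apply Finset.sum_congr rfl
    intro σ0 _
    exact (sum_one_block q h2 σ0).symm
  have relAB : invPoly m q * invPoly m' q * K = invPoly n q := by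
    rw [← fib_two_block q h1 h2, ← sum_q_pow_invCount q m, ← sum_q_pow_invCount q m']
    rw [Finset.sum_mul_sum]
    rw [Finset.sum_mul]
    apply Finset.sum_congr rfl
    intro σ0 _
    rw [Finset.sum_mul]
    apply Finset.sum_congr rfl
    intro σ0' _
    rw [sum_two_block q h1 h2 σ0 σ0', pow_add]
  have hKrel : K * invPoly n q = KA * KB := by
    have hne : invPoly m q * invPoly m' q ≠ 0 := by positivity
    apply mul_left_cancel₀ hne
    calc invPoly m q * invPoly m' q * (K * invPoly n q)
        = (invPoly m q * invPoly m' q * K) * invPoly n q := by ring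
      _ = invPoly n q * invPoly n q := by rw [relAB]
      _ = (invPoly m q * KA) * (invPoly m' q * KB) := by rw [relA, relB]
      _ = invPoly m q * invPoly m' q * (KA * KB) := by ring
  -- unfold mallowsProb
  rw [mallowsProb, mallowsProb, mallowsProb]
  have fset2 : (@Finset.filter _
      (fun x => x ∈ {πn : Equiv.Perm (Fin n) | OccursConsec σ πn i ∧ OccursConsec σ' πn i'})
      (fun a => Classical.propDecidable _) Finset.univ)
      = Finset.univ.filter (fun π : Equiv.Perm (Fin n) =>
          OccursConsec σ π i ∧ OccursConsec σ' π i') := by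
    ext π
    simp only [Finset.mem_filter, Set.mem_setOf_eq]
  have fsetA : (@Finset.filter _
      (fun x => x ∈ {πn : Equiv.Perm (Fin n) | OccursConsec σ πn i})
      (fun a => Classical.propDecidable _) Finset.univ)
      = Finset.univ.filter (fun π : Equiv.Perm (Fin n) => OccursConsec σ π i) := by
    ext π
    simp only [Finset.mem_filter, Set.mem_setOf_eq]
  have fsetB : (@Finset.filter _
      (fun x => x ∈ {πn : Equiv.Perm (Fin n) | OccursConsec σ' πn i'})
      (fun a => Classical.propDecidable _) Finset.univ)
      = Finset.univ.filter (fun π : Equiv.Perm (Fin n) => OccursConsec σ' π i') := by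
    ext π
    simp only [Finset.mem_filter, Set.mem_setOf_eq]
  rw [fset2, fsetA, fsetB]
  rw [sum_two_block q h1 h2 σ σ', sum_one_block q hA σ, sum_one_block q h2 σ']
  rw [← hKA, ← hKB, ← hK]
  rw [div_mul_div_comm]
  rw [div_eq_div_iff (by positivity) (by positivity)]
  rw [pow_add]
  linear_combination q ^ invCount σ * q ^ invCount σ' * invPoly n q * hKrel

end
end
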